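/- arXiv:2506.14279 — 6 statements merged into one kernel-verified Lean document; each statement's English description precedes it below -/
import Mathlib

section
/- Let G be an abelian group. The divisor-closed submonoids of the monoid B±(G) of plus-minus weighted zero-sum sequences over G are exactly the monoids B±(G₀) for subsets G₀ ⊆ G: each B±(G₀) is a divisor-closed submonoid of B±(G), and conversely every divisor-closed submonoid H of B±(G) equals B±(G₀) for some subset G₀ ⊆ G. -/
open Multiset

variable {G : Type*} [AddCommGroup G]

/-- `S` is a plus-minus weighted zero-sum sequence: `S` splits as `S₁ + S₂` with
`S₁.sum = S₂.sum`, i.e. some choice of signs `ε_i ∈ {+1, -1}` makes the weighted sum vanish. -/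
def IsPMZeroSum (S : Multiset G) : Prop :=
  ∃ S₁ S₂ : Multiset G, S = S₁ + S₂ ∧ S₁.sum = S₂.sum

/-- The monoid `B±(G₀)` of plus-minus weighted zero-sum sequences over `G₀ ⊆ G`, as an
additive submonoid of the free commutative monoid `Multiset G` of sequences over `G`. -/
def PMZS (G₀ : Set G) : AddSubmonoid (Multiset G) where
  carrier := {S | (∀ g ∈ S, g ∈ G₀) ∧ IsPMZeroSum S}
  zero_mem' := ⟨fun g hg => absurd hg (Multiset.notMem_zero g), 0, 0, by simp, rfl⟩
  add_mem' := by
    rintro S T ⟨hS, S₁, S₂, rfl, h12⟩ ⟨hT, T₁, T₂, rfl, h34⟩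
    exact ⟨fun g hg => (Multiset.mem_add.mp hg).elim (fun h => hS g h) (fun h => hT g h),
      S₁ + T₁, S₂ + T₂, add_add_add_comm S₁ S₂ T₁ T₂, by simp [h12, h34]⟩

/-- `A` is an atom (irreducible element) of the submonoid `H` of `Multiset G`. -/
def IsPMAtom (H : AddSubmonoid (Multiset G)) (A : Multiset G) : Prop :=
  A ∈ H ∧ A ≠ 0 ∧ ∀ B C : Multiset G, B ∈ H → C ∈ H → A = B + C → B = 0 ∨ C = 0

/-- The set of lengths `L(a)` of `a` in `H`: all `k` such that `a` is a sum of `k` atoms of `H`. -/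
def LengthSet (H : AddSubmonoid (Multiset G)) (a : Multiset G) : Set ℕ :=
  {k | ∃ l : List (Multiset G), (∀ A ∈ l, IsPMAtom H A) ∧ l.sum = a ∧ l.length = k}

/-- The set of successive distances `Δ(L)` of a set `L ⊆ ℕ`. -/
def DistSet (L : Set ℕ) : Set ℕ :=
  {d | 0 < d ∧ ∃ a ∈ L, a + d ∈ L ∧ ∀ b ∈ L, a < b → a + d ≤ b}

/-- The set of distances `Δ(H) = ⋃_{a ∈ H} Δ(L(a))`. -/
def DeltaM (H : AddSubmonoid (Multiset G)) : Set ℕ :=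
  {d | ∃ a ∈ H, d ∈ DistSet (LengthSet H a)}

/-- `a` divides `b` in `H`. -/
def DvdIn (H : AddSubmonoid (Multiset G)) (a b : Multiset G) : Prop :=
  ∃ c ∈ H, b = a + c

/-- `S` is a divisor-closed submonoid of `H`. -/
def IsDivClosed (H S : AddSubmonoid (Multiset G)) : Prop :=
  S ≤ H ∧ ∀ s ∈ S, ∀ a ∈ H, DvdIn H a s → a ∈ S

/-- The set of minimal distances
`Δ*(H) = {min Δ(S) : S a divisor-closed submonoid of H with Δ(S) ≠ ∅}`. -/
def DeltaStar (H : AddSubmonoid (Multiset G)) : Set ℕ :=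
  {d | ∃ S : AddSubmonoid (Multiset G), IsDivClosed H S ∧ (DeltaM S).Nonempty ∧ d = sInf (DeltaM S)}

/-- The set of lengths of atoms of `H`. -/
def AtomLengths (H : AddSubmonoid (Multiset G)) : Set ℕ :=
  {n | ∃ A : Multiset G, IsPMAtom H A ∧ Multiset.card A = n}

/-- The Davenport constant `D(H)` of `H`: the supremum of the lengths of the atoms of `H`.  -/
noncomputable def DavD (H : AddSubmonoid (Multiset G)) : ℕ :=
  sSup (AtomLengths H)

/-- The system of sets of lengths `L(H)` of `H`. -/
def LSys (H : AddSubmonoid (Multiset G)) : Set (Set ℕ) :=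
  {L | ∃ a ∈ H, L = LengthSet H a}

/-- `d` is the greatest common divisor of the set `S` of integers. -/
def IsSetGCD (S : Set ℤ) (d : ℕ) : Prop :=
  (∀ x ∈ S, (d : ℤ) ∣ x) ∧ ∀ c : ℕ, (∀ x ∈ S, (c : ℤ) ∣ x) → c ∣ d

/-- A family `e` of elements of an abelian group is independent if `∑ c i • e i = 0`
with integer coefficients implies `c i • e i = 0` for each `i`. -/
def IsIndepFamily {k : ℕ} (e : Fin k → G) : Prop :=
  ∀ c : Fin k → ℤ, ∑ i, c i • e i = 0 → ∀ i, c i • e i = 0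

/-- The (classical) Davenport constant of the abelian group `G`: the smallest `ℓ` such that
every sequence over `G` of length at least `ℓ` has a nonempty zero-sum subsequence. -/
noncomputable def DavenportGroup (G : Type*) [AddCommGroup G] : ℕ :=
  sInf {ℓ | ∀ S : Multiset G, ℓ ≤ Multiset.card S → ∃ T, T ≤ S ∧ T ≠ 0 ∧ T.sum = 0}

/-- The divisor-closed submonoids of `B±(G)` are exactly the monoids `B±(G₀)` for
subsets `G₀ ⊆ G`. -/
theorem stmt_0 (G : Type*) [AddCommGroup G] :
    (∀ G₀ : Set G, IsDivClosed (PMZS (Set.univ : Set G)) (PMZS G₀)) ∧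
    (∀ S : AddSubmonoid (Multiset G), IsDivClosed (PMZS (Set.univ : Set G)) S →
      ∃ G₀ : Set G, S = PMZS G₀) := by
  have hmem : ∀ (G₀ : Set G) (s : Multiset G),
      s ∈ PMZS G₀ ↔ (∀ g ∈ s, g ∈ G₀) ∧ IsPMZeroSum s := fun _ _ => Iff.rfl
  have hdouble : ∀ X : Multiset G, X + X ∈ PMZS (Set.univ : Set G) := by
    intro X
    exact ⟨fun g _ => Set.mem_univ g, X, X, rfl, rfl⟩
  constructor
  · intro G₀
    constructor
    · intro s hs
      exact ⟨fun g _ => Set.mem_univ g, ((hmem G₀ s).mp hs).2⟩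
    · rintro s hs a ha ⟨c, hc, rfl⟩
      refine (hmem G₀ a).mpr ⟨fun g hg => ((hmem G₀ _).mp hs).1 g ?_, ((hmem _ a).mp ha).2⟩
      exact Multiset.mem_add.mpr (Or.inl hg)
  · intro S hS
    refine ⟨{g | ∃ t ∈ S, g ∈ t}, ?_⟩
    have hpair : ∀ g : G, (∃ t ∈ S, g ∈ t) → ({g, g} : Multiset G) ∈ S := by
      rintro g ⟨t, htS, hgt⟩
      obtain ⟨u, rfl⟩ := Multiset.exists_cons_of_mem hgt
      have htt : (g ::ₘ u) + (g ::ₘ u) ∈ S := S.add_mem htS htS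
      have heq : (g ::ₘ u) + (g ::ₘ u) = ({g, g} : Multiset G) + (u + u) := by
        rw [Multiset.cons_add, Multiset.add_cons, Multiset.insert_eq_cons, Multiset.cons_add,
          Multiset.singleton_add]
      refine hS.2 _ htt {g, g} ⟨fun x _ => Set.mem_univ x, {g}, {g}, ?_, rfl⟩
        ⟨u + u, hdouble _, heq⟩
      simp [Multiset.insert_eq_cons]
    have hXX : ∀ X : Multiset G, (∀ g ∈ X, ∃ t ∈ S, g ∈ t) → X + X ∈ S := by
      intro X
      induction X using Multiset.induction with
      | empty => intro _; simpa using S.zero_mem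
      | cons g X ih =>
        intro h
        have h1 : ({g, g} : Multiset G) ∈ S := hpair g (h g (Multiset.mem_cons_self g X))
        have h2 : X + X ∈ S := ih (fun x hx => h x (Multiset.mem_cons_of_mem hx))
        have : (g ::ₘ X) + (g ::ₘ X) = ({g, g} : Multiset G) + (X + X) := by
          rw [Multiset.cons_add, Multiset.add_cons, Multiset.insert_eq_cons, Multiset.cons_add,
            Multiset.singleton_add]
        rw [this]
        exact S.add_mem h1 h2
    ext s
    rw [hmem]
    constructor
    · intro hs
      exact ⟨fun g hg => ⟨s, hs, hg⟩, (hS.1 hs).2⟩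
    · rintro ⟨h1, h2⟩
      have hss : s + s ∈ S := hXX s h1
      have hsH : s ∈ PMZS (Set.univ : Set G) := ⟨fun g _ => Set.mem_univ g, h2⟩
      exact hS.2 (s + s) hss s hsH ⟨s, hsH, rfl⟩
end

section
/- Let G be an abelian group and let G₀ ⊆ G \ {0} be non-empty, and let H = B±(G₀). Then for each atom A of H one has {2, |A|} ⊆ L(A²). In particular, if Δ(H) ≠ ∅, then min Δ(H) divides |A| − 2 for every atom A of H, and min Δ(H) divides gcd{|A| − 2 : A an atom of H}, which equals gcd{|A| − |A'| : A, A' atoms of H}. -/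
open Multiset

variable {G : Type*} [AddCommGroup G]

lemma my_two_le_card {G₀ : Set G} (h0 : (0:G) ∉ G₀) {S : Multiset G}
    (hS : S ∈ PMZS G₀) (hS0 : S ≠ 0) : 2 ≤ Multiset.card S := by
  obtain ⟨hmem, S₁, S₂, rfl, hsum⟩ := hS
  by_contra h
  have hc1 : Multiset.card S₁ + Multiset.card S₂ = 1 := by
    have h1 : Multiset.card (S₁ + S₂) ≠ 0 := by
      simpa [Multiset.card_eq_zero] using hS0
    have := Multiset.card_add S₁ S₂
    omega
  rcases Nat.add_eq_one_iff.mp hc1 with ⟨h1, h2⟩ | ⟨h1, h2⟩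
  · obtain ⟨g, rfl⟩ := Multiset.card_eq_one.mp h2
    have hS10 : S₁ = 0 := Multiset.card_eq_zero.mp h1
    have : g = 0 := by
      rw [hS10] at hsum; simpa using hsum.symm
    exact h0 (this ▸ hmem g (by simp))
  · obtain ⟨g, rfl⟩ := Multiset.card_eq_one.mp h1
    have hS20 : S₂ = 0 := Multiset.card_eq_zero.mp h2
    have : g = 0 := by
      rw [hS20] at hsum; simpa using hsum
    exact h0 (this ▸ hmem g (by simp))

lemma my_pair_mem {G₀ : Set G} {g : G} (hg : g ∈ G₀) :
    ({g, g} : Multiset G) ∈ PMZS G₀ := by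
  refine ⟨fun x hx => ?_, {g}, {g}, by simp [Multiset.insert_eq_cons, Multiset.singleton_add], rfl⟩
  rcases Multiset.mem_cons.mp hx with rfl | hx
  · exact hg
  · rw [Multiset.mem_singleton.mp hx]; exact hg

lemma my_pair_atom {G₀ : Set G} (h0 : (0:G) ∉ G₀) {g : G} (hg : g ∈ G₀) :
    IsPMAtom (PMZS G₀) ({g, g} : Multiset G) := by
  refine ⟨my_pair_mem hg, by simp, fun B C hB hC hBC => ?_⟩
  by_contra h
  push_neg at h
  have h1 := my_two_le_card h0 hB h.1
  have h2 := my_two_le_card h0 hC h.2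
  have : Multiset.card ({g, g} : Multiset G) = Multiset.card B + Multiset.card C := by
    rw [hBC]; exact Multiset.card_add B C
  simp at this
  omega

lemma my_sum_pairs (l : List G) :
    (l.map fun g => ({g, g} : Multiset G)).sum = (↑l : Multiset G) + ↑l := by
  induction l with
  | nil => simp
  | cons a l ih =>
    have hpair : ({a, a} : Multiset G) = {a} + {a} := rfl
    rw [List.map_cons, List.sum_cons, ih, hpair, ← Multiset.cons_coe, ← Multiset.singleton_add]
    abel

lemma my_card_mem {G₀ : Set G} (h0 : (0:G) ∉ G₀) {A : Multiset G}
    (hA : ∀ g ∈ A, g ∈ G₀) :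
    Multiset.card A ∈ LengthSet (PMZS G₀) (A + A) := by
  refine ⟨A.toList.map fun g => ({g, g} : Multiset G), ?_, ?_, by simp⟩
  · intro B hB
    obtain ⟨g, hg, rfl⟩ := List.mem_map.mp hB
    exact my_pair_atom h0 (hA g (by rwa [← Multiset.mem_toList]))
  · rw [my_sum_pairs, Multiset.coe_toList]

lemma my_length_add {H : AddSubmonoid (Multiset G)} {a b : Multiset G} {x y : ℕ}
    (hx : x ∈ LengthSet H a) (hy : y ∈ LengthSet H b) : x + y ∈ LengthSet H (a + b) := by
  obtain ⟨l, hl, hls, hll⟩ := hx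
  obtain ⟨m, hm, hms, hml⟩ := hy
  exact ⟨l ++ m, fun A hA => (List.mem_append.mp hA).elim (hl A) (hm A),
    by simp [hls, hms], by simp [hll, hml]⟩

lemma my_length_nsmul {H : AddSubmonoid (Multiset G)} {a : Multiset G} {x : ℕ}
    (hx : x ∈ LengthSet H a) (q : ℕ) : q * x ∈ LengthSet H (q • a) := by
  induction q with
  | zero => exact ⟨[], by simp, by simp, by simp⟩
  | succ n ih =>
    rw [succ_nsmul, Nat.succ_mul]
    exact my_length_add ih hx

lemma my_exists_gap {L : Set ℕ} {x y : ℕ} (hx : x ∈ L) (hy : y ∈ L) (hxy : x < y) :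
    ∃ g ∈ DistSet L, ∃ c ∈ L, x ≤ c ∧ c + g ∈ L ∧ c + g ≤ y := by
  set T := {b | b ∈ L ∧ x ≤ b ∧ b < y} with hT
  have haT : sSup T ∈ T := Nat.sSup_mem ⟨x, hx, le_refl x, hxy⟩ ⟨y, fun b hb => hb.2.2.le⟩
  set a := sSup T with ha
  set U := {b | b ∈ L ∧ a < b} with hU
  have hyU : y ∈ U := ⟨hy, haT.2.2⟩
  have hmU : sInf U ∈ U := Nat.sInf_mem ⟨y, hyU⟩
  set m := sInf U with hm
  have hmy : m ≤ y := Nat.sInf_le hyU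
  have ham : a < m := hmU.2
  refine ⟨m - a, ⟨by omega, a, haT.1, ?_, ?_⟩, a, haT.1, haT.2.1, ?_, ?_⟩
  · rw [Nat.add_sub_cancel' ham.le]; exact hmU.1
  · intro b hb hab
    rw [Nat.add_sub_cancel' ham.le]
    exact Nat.sInf_le ⟨hb, hab⟩
  · rw [Nat.add_sub_cancel' ham.le]; exact hmU.1
  · rw [Nat.add_sub_cancel' ham.le]; exact hmy

lemma my_min_dvd_delta {H : AddSubmonoid (Multiset G)} (hne : (DeltaM H).Nonempty)
    {e : ℕ} (he : e ∈ DeltaM H) : sInf (DeltaM H) ∣ e := by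
  set m := sInf (DeltaM H) with hmdef
  obtain ⟨a, haH, hm0, k, hk, hkm, -⟩ := Nat.sInf_mem hne
  obtain ⟨b, hbH, he0, l, hl, hle, -⟩ := he
  by_contra hdvd
  have hr : 0 < e % m := Nat.pos_of_ne_zero (fun h => hdvd (Nat.dvd_of_mod_eq_zero h))
  set q := e / m with hq
  have hqm : m * q + e % m = e := Nat.div_add_mod e m
  have hc : (q • a + b) ∈ H := H.add_mem (AddSubmonoid.nsmul_mem H haH q) hbH
  have hx : q * (k + m) + l ∈ LengthSet H (q • a + b) := my_length_add (my_length_nsmul hkm q) hl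
  have hy : q * k + (l + e) ∈ LengthSet H (q • a + b) := my_length_add (my_length_nsmul hk q) hle
  have hmul : q * (k + m) = q * k + q * m := Nat.mul_add q k m
  have hcom : q * m = m * q := Nat.mul_comm q m
  obtain ⟨P, hP⟩ : ∃ P, q * k = P := ⟨_, rfl⟩
  obtain ⟨Q, hQ⟩ : ∃ Q, q * m = Q := ⟨_, rfl⟩
  rw [hmul, hP, hQ] at hx
  rw [hP] at hy
  have hEQ : Q + e % m = e := by rw [← hQ, hcom]; exact hqm
  have hxy : P + Q + l < P + (l + e) := by omega
  obtain ⟨g, ⟨hg0, hgw⟩, c, hcL, hxc, hcgL, hcgy⟩ := my_exists_gap hx hy hxy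
  have hmg : m ≤ g := Nat.sInf_le ⟨_, hc, hg0, hgw⟩
  have hlt : e % m < m := Nat.mod_lt e hm0
  omega

lemma my_min_dvd_diff {H : AddSubmonoid (Multiset G)} (hne : (DeltaM H).Nonempty) :
    ∀ n : ℕ, ∀ a : Multiset G, ∀ x y : ℕ, a ∈ H → x ∈ LengthSet H a →
      y ∈ LengthSet H a → x ≤ y → y - x ≤ n → sInf (DeltaM H) ∣ y - x := by
  intro n
  induction n with
  | zero =>
    intro a x y _ _ _ hxy hb
    have : y - x = 0 := by omega
    simp [this]
  | succ n ih =>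
    intro a x y ha hx hy hxy hb
    rcases eq_or_lt_of_le hxy with rfl | hlt
    · simp
    · obtain ⟨g, hg, c, hcL, hxc, hcgL, hcgy⟩ := my_exists_gap hx hy hlt
      have hg0 : 0 < g := hg.1
      have hmg : sInf (DeltaM H) ∣ g := my_min_dvd_delta hne ⟨a, ha, hg⟩
      have h1 : sInf (DeltaM H) ∣ c - x := ih a x c ha hx hcL hxc (by omega)
      have h2 : sInf (DeltaM H) ∣ y - (c + g) := ih a (c+g) y ha hcgL hy hcgy (by omega)
      have : y - x = (c - x) + g + (y - (c + g)) := by omega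
      rw [this]
      exact dvd_add (dvd_add h1 hmg) h2

/-- For `G₀ ⊆ G \ {0}` nonempty and `H = B±(G₀)`: every atom `A` satisfies
`{2, |A|} ⊆ L(A²)`; if `Δ(H) ≠ ∅` then `min Δ(H)` divides `|A| - 2` for every atom `A`,
and `min Δ(H)` divides `gcd {|A| - 2 : A atom}`, which equals `gcd {|A| - |A'| : A, A' atoms}`. -/
theorem stmt_1 (G : Type*) [AddCommGroup G] (G₀ : Set G) (h0 : (0 : G) ∉ G₀)
    (hne : G₀.Nonempty) :
    (∀ A : Multiset G, IsPMAtom (PMZS G₀) A →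
      ({2, Multiset.card A} : Set ℕ) ⊆ LengthSet (PMZS G₀) (A + A)) ∧
    ((DeltaM (PMZS G₀)).Nonempty →
      (∀ A : Multiset G, IsPMAtom (PMZS G₀) A →
        ((sInf (DeltaM (PMZS G₀)) : ℕ) : ℤ) ∣ (Multiset.card A : ℤ) - 2) ∧
      (∀ d : ℕ,
        IsSetGCD {x : ℤ | ∃ A : Multiset G,
            IsPMAtom (PMZS G₀) A ∧ x = (Multiset.card A : ℤ) - 2} d →
          sInf (DeltaM (PMZS G₀)) ∣ d ∧
          IsSetGCD {x : ℤ | ∃ A A' : Multiset G,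
            IsPMAtom (PMZS G₀) A ∧ IsPMAtom (PMZS G₀) A' ∧
            x = (Multiset.card A : ℤ) - (Multiset.card A' : ℤ)} d)) := by
  have key : ∀ A : Multiset G, IsPMAtom (PMZS G₀) A →
      ({2, Multiset.card A} : Set ℕ) ⊆ LengthSet (PMZS G₀) (A + A) := by
    intro A hA n hn
    rcases hn with rfl | hn
    · exact ⟨[A, A], by simp [hA], by simp, rfl⟩
    · rw [Set.mem_singleton_iff.mp hn]
      exact my_card_mem h0 hA.1.1
  refine ⟨key, fun hΔ => ?_⟩
  have dvd2 : ∀ A : Multiset G, IsPMAtom (PMZS G₀) A →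
      ((sInf (DeltaM (PMZS G₀)) : ℕ) : ℤ) ∣ (Multiset.card A : ℤ) - 2 := by
    intro A hA
    have h2 : 2 ∈ LengthSet (PMZS G₀) (A + A) := key A hA (by simp)
    have hc : Multiset.card A ∈ LengthSet (PMZS G₀) (A + A) := key A hA (by simp)
    have hcard : 2 ≤ Multiset.card A := my_two_le_card h0 hA.1 hA.2.1
    have hAA : (A + A) ∈ PMZS G₀ := (PMZS G₀).add_mem hA.1 hA.1
    have hdvd : sInf (DeltaM (PMZS G₀)) ∣ Multiset.card A - 2 :=
      my_min_dvd_diff hΔ (Multiset.card A - 2) (A + A) 2 (Multiset.card A)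
        hAA h2 hc hcard le_rfl
    have := Int.natCast_dvd_natCast.mpr hdvd
    rwa [Nat.cast_sub hcard] at this
  refine ⟨dvd2, fun d hd => ?_⟩
  refine ⟨hd.2 _ (fun x hx => ?_), ?_, ?_⟩
  · obtain ⟨A, hA, rfl⟩ := hx
    exact dvd2 A hA
  · rintro x ⟨A, A', hA, hA', rfl⟩
    have h1 := hd.1 _ ⟨A, hA, rfl⟩
    have h2 := hd.1 _ ⟨A', hA', rfl⟩
    have : (Multiset.card A : ℤ) - (Multiset.card A' : ℤ) =
        ((Multiset.card A : ℤ) - 2) - ((Multiset.card A' : ℤ) - 2) := by ring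
    rw [this]
    exact dvd_sub h1 h2
  · intro c hc
    apply hd.2
    rintro x ⟨A, hA, rfl⟩
    obtain ⟨g, hg⟩ := hne
    have hpa := my_pair_atom h0 hg
    have hcard2 : (Multiset.card ({g, g} : Multiset G) : ℤ) = 2 := by simp
    have := hc _ ⟨A, {g, g}, hA, hpa, rfl⟩
    rwa [hcard2] at this
end

section
/- Let G be an abelian group, G₀ ⊆ G a subset, and H = B±(G₀). Then: (1) H is half-factorial (i.e. |L(a)| = 1 for each a ∈ H) if and only if D(H) ≤ 2; (2) if Δ(H) ≠ ∅ and D(H) is finite, then min Δ(H) divides D(H) − 2. -/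
open Multiset

variable {G : Type*} [AddCommGroup G]

-- ######### aux #########
variable [DecidableEq G]

lemma singleton_mem_PMZS {G₀ : Set G} {g : G} (h : ({g} : Multiset G) ∈ PMZS G₀) : g = 0 := by
  obtain ⟨-, S₁, S₂, hsplit, hsum⟩ := h
  have hcard : Multiset.card S₁ + Multiset.card S₂ = 1 := by
    have := congrArg Multiset.card hsplit; simpa using this.symm
  rcases Nat.add_eq_one_iff.mp hcard with ⟨h1, h2⟩ | ⟨h1, h2⟩
  · have hS1 : S₁ = 0 := Multiset.card_eq_zero.mp h1
    have : S₂ = {g} := by rw [hS1] at hsplit; simpa using hsplit.symm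
    rw [hS1, this] at hsum; simpa using hsum.symm
  · have hS2 : S₂ = 0 := Multiset.card_eq_zero.mp h2
    have : S₁ = {g} := by rw [hS2] at hsplit; simpa using hsplit.symm
    rw [hS2, this] at hsum; simpa using hsum

lemma erase_zero_mem_PMZS {G₀ : Set G} {a : Multiset G} (ha : a ∈ PMZS G₀) (h0 : (0:G) ∈ a) :
    a.erase 0 ∈ PMZS G₀ := by
  obtain ⟨hG, S₁, S₂, rfl, hsum⟩ := ha
  refine ⟨fun g hg => hG g (Multiset.mem_of_mem_erase hg), ?_⟩
  rcases Multiset.mem_add.mp h0 with h | h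
  · exact ⟨S₁.erase 0, S₂, by rw [Multiset.erase_add_left_pos _ h], by
      have := Multiset.cons_erase h
      have hs : S₁.sum = (S₁.erase 0).sum := by
        conv_lhs => rw [← this]
        simp
      rw [← hs]; exact hsum⟩
  · exact ⟨S₁, S₂.erase 0, by rw [Multiset.erase_add_right_pos _ h], by
      have := Multiset.cons_erase h
      have hs : S₂.sum = (S₂.erase 0).sum := by
        conv_lhs => rw [← this]
        simp
      rw [← hs]; exact hsum⟩

lemma zero_mem_PMZS_of {G₀ : Set G} (h : (0:G) ∈ G₀) : ({(0:G)} : Multiset G) ∈ PMZS G₀ :=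
  ⟨by intro g hg; rw [Multiset.mem_singleton] at hg; subst hg; exact h,
   {0}, 0, by simp, by simp⟩

lemma zero_not_mem_atom {G₀ : Set G} {A : Multiset G} (hA : IsPMAtom (PMZS G₀) A)
    (h2 : 2 ≤ Multiset.card A) : (0:G) ∉ A := by
  intro h0
  obtain ⟨hAH, hA0, hirr⟩ := hA
  have h0G : (0:G) ∈ G₀ := hAH.1 0 h0
  have h1 : ({(0:G)} : Multiset G) ∈ PMZS G₀ := zero_mem_PMZS_of h0G
  have h2' : A.erase 0 ∈ PMZS G₀ := erase_zero_mem_PMZS hAH h0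
  have hsplit : A = {(0:G)} + A.erase 0 := by
    rw [Multiset.singleton_add, Multiset.cons_erase h0]
  rcases hirr _ _ h1 h2' hsplit with h | h
  · simp at h
  · have := congrArg Multiset.card hsplit
    rw [h] at this
    simp at this
    omega

lemma pair_atom {G₀ : Set G} {g : G} (hg : g ∈ G₀) (hg0 : g ≠ 0) :
    IsPMAtom (PMZS G₀) ({g, g} : Multiset G) := by
  refine ⟨⟨?_, {g}, {g}, ?_, rfl⟩, ?_, ?_⟩
  · intro x hx
    rcases Multiset.mem_cons.mp hx with h | h
    · subst h; exact hg
    · rw [Multiset.mem_singleton] at h; subst h; exact hg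
  · rfl
  · simp
  · intro B C hB hC hBC
    by_contra hcon
    push_neg at hcon
    obtain ⟨hB0, hC0⟩ := hcon
    have hcard : Multiset.card B + Multiset.card C = 2 := by
      have := congrArg Multiset.card hBC; simpa using this.symm
    have hB1 : Multiset.card B = 1 := by
      have := Multiset.card_pos.mpr hB0
      have := Multiset.card_pos.mpr hC0
      omega
    obtain ⟨x, rfl⟩ := Multiset.card_eq_one.mp hB1
    have hx : x ∈ ({g, g} : Multiset G) := by
      rw [hBC]; exact Multiset.mem_add.mpr (Or.inl (Multiset.mem_singleton_self x))
    have : x = g := by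
      rcases Multiset.mem_cons.mp hx with h | h
      · exact h
      · exact Multiset.mem_singleton.mp h
    subst this
    exact hg0 (singleton_mem_PMZS hB)

lemma length_add {H : AddSubmonoid (Multiset G)} {a b : Multiset G} {u v : ℕ}
    (hu : u ∈ LengthSet H a) (hv : v ∈ LengthSet H b) : u + v ∈ LengthSet H (a + b) := by
  obtain ⟨l1, hl1, hs1, hlen1⟩ := hu
  obtain ⟨l2, hl2, hs2, hlen2⟩ := hv
  exact ⟨l1 ++ l2, by intro A hA; rcases List.mem_append.mp hA with h | h; exacts [hl1 A h, hl2 A h],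
    by rw [List.sum_append, hs1, hs2], by rw [List.length_append, hlen1, hlen2]⟩

lemma length_nsmul {H : AddSubmonoid (Multiset G)} {a : Multiset G} {k : ℕ}
    (hk : k ∈ LengthSet H a) : ∀ n : ℕ, n * k ∈ LengthSet H (n • a) := by
  intro n
  induction n with
  | zero => exact ⟨[], by simp, by simp, by simp⟩
  | succ n ih =>
      have := length_add hk ih
      rw [succ_nsmul, add_comm a (n • a), Nat.succ_mul, Nat.add_comm (n*k) k] at *
      exact this

lemma gap_lemma {L : Set ℕ} {u w : ℕ} (hu : u ∈ L) (hw : w ∈ L) (h : u < w) :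
    ∃ u' ∈ L, u < u' ∧ u' ≤ w ∧ (u' - u) ∈ DistSet L := by
  have hTne : Set.Nonempty {b | b ∈ L ∧ u < b} := ⟨w, hw, h⟩
  obtain ⟨hmem1, hmem2⟩ := Nat.sInf_mem hTne
  have hle : sInf {b | b ∈ L ∧ u < b} ≤ w := Nat.sInf_le ⟨hw, h⟩
  set s := sInf {b | b ∈ L ∧ u < b} with hs
  refine ⟨s, hmem1, hmem2, hle, ⟨by omega, u, hu, ?_, ?_⟩⟩
  · have h1 : u + (s - u) = s := by omega
    rw [h1]; exact hmem1
  · intro b hb hub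
    have h1 : u + (s - u) = s := by omega
    rw [h1]; exact Nat.sInf_le ⟨hb, hub⟩

lemma sInf_dvd_mem {G₀ : Set G} (hne : (DeltaM (PMZS G₀)).Nonempty) {e : ℕ}
    (he : e ∈ DeltaM (PMZS G₀)) : sInf (DeltaM (PMZS G₀)) ∣ e := by
  set H := PMZS G₀
  set d := sInf (DeltaM H) with hd
  have hdmem : d ∈ DeltaM H := Nat.sInf_mem hne
  obtain ⟨a, haH, hdpos, k, hk, hkd, -⟩ := hdmem
  obtain ⟨b, hbH, hepos, m, hm, hme, -⟩ := he
  by_contra hnd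
  set q := e / d with hq
  set r := e % d with hr
  have hdm : e = d * q + r := (Nat.div_add_mod e d).symm
  have hrd : r < d := Nat.mod_lt _ hdpos
  have hr0 : 0 < r := by
    rcases Nat.eq_zero_or_pos r with h | h
    · exact absurd (Dvd.intro q (by omega)) hnd
    · exact h
  set x := q + 1 with hx
  set c := x • a + b with hc
  have hcH : c ∈ H := H.add_mem (AddSubmonoid.nsmul_mem H haH x) hbH
  have hu : x * (k + d) + m ∈ LengthSet H c := length_add (length_nsmul hkd x) hm
  have hv : x * k + (m + e) ∈ LengthSet H c := length_add (length_nsmul hk x) hme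
  have h1 : x * (k + d) = x * k + d * q + d := by rw [hx]; ring
  rw [h1] at hu
  set P := x * k with hP
  set Q := d * q with hQ
  have hvu : P + (m + e) < P + Q + d + m := by omega
  obtain ⟨u', hu'L, hvu', hu'u, hdist⟩ := gap_lemma hv hu hvu
  have hΔ : u' - (P + (m + e)) ∈ DeltaM H := ⟨c, hcH, hdist⟩
  have hdle : d ≤ u' - (P + (m + e)) := Nat.sInf_le hΔ
  omega

lemma sInf_dvd_sub {G₀ : Set G} (hne : (DeltaM (PMZS G₀)).Nonempty) {a : Multiset G}
    (haH : a ∈ PMZS G₀) {u v : ℕ} (hu : u ∈ LengthSet (PMZS G₀) a)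
    (hv : v ∈ LengthSet (PMZS G₀) a) (huv : u ≤ v) : sInf (DeltaM (PMZS G₀)) ∣ v - u := by
  set d := sInf (DeltaM (PMZS G₀)) with hd
  obtain ⟨n, hn⟩ : ∃ n, v - u = n := ⟨v - u, rfl⟩
  induction n using Nat.strong_induction_on generalizing u with
  | _ n ih =>
    rcases Nat.eq_or_lt_of_le huv with h | h
    · subst h; simp
    · obtain ⟨u', hu'L, huu', hu'v, hdist⟩ := gap_lemma hu hv h
      have h1 : d ∣ u' - u := sInf_dvd_mem hne ⟨a, haH, hdist⟩
      have h2 : d ∣ v - u' := ih (v - u') (by omega) hu'L hu'v rfl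
      have : v - u = (v - u') + (u' - u) := by omega
      rw [this]
      exact Dvd.dvd.add h2 h1

lemma pairs_sum (L : List G) :
    (L.map fun g => ({g, g} : Multiset G)).sum = (↑L : Multiset G) + ↑L := by
  induction L with
  | nil => simp
  | cons g t ih =>
      simp only [List.map_cons, List.sum_cons, ih, ← Multiset.cons_coe]
      rw [show ({g, g} : Multiset G) = g ::ₘ g ::ₘ 0 from rfl]
      simp only [← Multiset.singleton_add, add_zero]
      abel

lemma two_mem_double {G₀ : Set G} {A : Multiset G} (hA : IsPMAtom (PMZS G₀) A) :
    2 ∈ LengthSet (PMZS G₀) (A + A) := by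
  refine ⟨[A, A], ?_, by simp, rfl⟩
  intro B hB
  rcases List.mem_cons.mp hB with h | h
  · subst h; exact hA
  · rw [List.mem_singleton] at h; subst h; exact hA

lemma card_mem_double {G₀ : Set G} {A : Multiset G} (hA : IsPMAtom (PMZS G₀) A)
    (h2 : 2 ≤ Multiset.card A) : Multiset.card A ∈ LengthSet (PMZS G₀) (A + A) := by
  refine ⟨A.toList.map fun g => ({g, g} : Multiset G), ?_, ?_, by simp⟩
  · intro B hB
    obtain ⟨g, hg, rfl⟩ := List.mem_map.mp hB
    have hgA : g ∈ A := by rwa [Multiset.mem_toList] at hg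
    exact pair_atom (hA.1.1 g hgA) (fun h => zero_not_mem_atom hA h2 (h ▸ hgA))
  · rw [pairs_sum, Multiset.coe_toList]

lemma exists_fact {G₀ : Set G} : ∀ a ∈ PMZS G₀, ∃ l : List (Multiset G),
    (∀ A ∈ l, IsPMAtom (PMZS G₀) A) ∧ l.sum = a := by
  intro a ha
  obtain ⟨n, hn⟩ : ∃ n, Multiset.card a = n := ⟨_, rfl⟩
  induction n using Nat.strong_induction_on generalizing a with
  | _ n ih =>
    rcases eq_or_ne a 0 with rfl | ha0
    · exact ⟨[], by simp, rfl⟩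
    by_cases hat : IsPMAtom (PMZS G₀) a
    · exact ⟨[a], by simpa using hat, by simp⟩
    · have h : ¬ ∀ B C : Multiset G, B ∈ PMZS G₀ → C ∈ PMZS G₀ → a = B + C →
          B = 0 ∨ C = 0 := fun h' => hat ⟨ha, ha0, h'⟩
      push_neg at h
      obtain ⟨B, C, hB, hC, hBC, hB0, hC0⟩ := h
      have hcards : Multiset.card B + Multiset.card C = n := by
        rw [← hn, hBC]; simp
      have hBpos := Multiset.card_pos.mpr hB0
      have hCpos := Multiset.card_pos.mpr hC0
      obtain ⟨l1, hl1, hs1⟩ := ih (Multiset.card B) (by omega) B hB rfl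
      obtain ⟨l2, hl2, hs2⟩ := ih (Multiset.card C) (by omega) C hC rfl
      refine ⟨l1 ++ l2, ?_, by rw [List.sum_append, hs1, hs2, ← hBC]⟩
      intro A hA
      rcases List.mem_append.mp hA with h | h
      exacts [hl1 A h, hl2 A h]

lemma atom_count_card {G₀ : Set G} (hat : ∀ A : Multiset G, IsPMAtom (PMZS G₀) A → Multiset.card A ≤ 2)
    {A : Multiset G} (hA : IsPMAtom (PMZS G₀) A) :
    Multiset.count (0:G) A + Multiset.card A = 2 := by
  have hle := hat A hA
  interval_cases h : Multiset.card A
  · exact absurd (Multiset.card_eq_zero.mp h) hA.2.1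
  · obtain ⟨g, rfl⟩ := Multiset.card_eq_one.mp h
    have : g = 0 := singleton_mem_PMZS hA.1
    subst this
    simp
  · have h0 : (0:G) ∉ A := zero_not_mem_atom hA (by omega)
    rw [Multiset.count_eq_zero.mpr h0]

lemma fact_length_eq {G₀ : Set G} (hat : ∀ A : Multiset G, IsPMAtom (PMZS G₀) A → Multiset.card A ≤ 2)
    (l : List (Multiset G)) (hl : ∀ A ∈ l, IsPMAtom (PMZS G₀) A) :
    2 * l.length = Multiset.count (0:G) l.sum + Multiset.card l.sum := by
  induction l with
  | nil => simp
  | cons A t ih =>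
      have hA := hl A List.mem_cons_self
      have ht := ih fun B hB => hl B (List.mem_cons_of_mem A hB)
      have hkey := atom_count_card hat hA
      simp only [List.sum_cons, List.length_cons, Multiset.count_add, Multiset.card_add]
      omega

/-- For `H = B±(G₀)`: (1) `H` is half-factorial iff `D(H) ≤ 2` (i.e. iff every atom has
length at most 2); (2) if `Δ(H) ≠ ∅` and `D(H)` is finite, then `min Δ(H) ∣ D(H) - 2`. -/
theorem stmt_2 (G : Type*) [AddCommGroup G] (G₀ : Set G) :
    ((∀ a ∈ PMZS G₀, ∃! k : ℕ, k ∈ LengthSet (PMZS G₀) a) ↔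
      ∀ A : Multiset G, IsPMAtom (PMZS G₀) A → Multiset.card A ≤ 2) ∧
    ((DeltaM (PMZS G₀)).Nonempty → BddAbove (AtomLengths (PMZS G₀)) →
      sInf (DeltaM (PMZS G₀)) ∣ DavD (PMZS G₀) - 2) := by
  classical
  have hiff : (∀ a ∈ PMZS G₀, ∃! k : ℕ, k ∈ LengthSet (PMZS G₀) a) ↔
      ∀ A : Multiset G, IsPMAtom (PMZS G₀) A → Multiset.card A ≤ 2 := by
    constructor
    · intro hhf A hA
      by_contra hcard
      push_neg at hcard
      have h2 : 2 ≤ Multiset.card A := by omega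
      have hAA : A + A ∈ PMZS G₀ := (PMZS G₀).add_mem hA.1 hA.1
      obtain ⟨k, hk, huniq⟩ := hhf (A + A) hAA
      have e1 := huniq 2 (two_mem_double hA)
      have e2 := huniq (Multiset.card A) (card_mem_double hA h2)
      omega
    · intro hat a ha
      obtain ⟨l, hl, hs⟩ := exists_fact a ha
      refine ⟨l.length, ⟨l, hl, hs, rfl⟩, ?_⟩
      rintro k ⟨l', hl', hs', hlen'⟩
      have h1 := fact_length_eq hat l hl
      have h2 := fact_length_eq hat l' hl'
      rw [hs] at h1
      rw [hs'] at h2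
      omega
  refine ⟨hiff, ?_⟩
  intro hne hbdd
  have hne' := hne
  obtain ⟨e, a, haH, hepos, k, hk, hke, -⟩ := hne'
  have hnot : ¬ ∀ A : Multiset G, IsPMAtom (PMZS G₀) A → Multiset.card A ≤ 2 := by
    intro hat
    obtain ⟨k', hk', huniq⟩ := hiff.mpr hat a haH
    have e1 := huniq k hk
    have e2 := huniq (k + e) hke
    omega
  push_neg at hnot
  obtain ⟨A₀, hA₀, hA₀c⟩ := hnot
  have hALne : (AtomLengths (PMZS G₀)).Nonempty := ⟨_, A₀, hA₀, rfl⟩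
  have hN : DavD (PMZS G₀) ∈ AtomLengths (PMZS G₀) := Nat.sSup_mem hALne hbdd
  obtain ⟨A, hA, hAc⟩ := hN
  have hge : 3 ≤ DavD (PMZS G₀) :=
    le_trans (by omega) (le_csSup hbdd ⟨A₀, hA₀, rfl⟩)
  have h2m := two_mem_double hA
  have hNm := card_mem_double hA (by omega)
  have hdvd := sInf_dvd_sub hne ((PMZS G₀).add_mem hA.1 hA.1) h2m hNm (by omega)
  rwa [hAc] at hdvd
end

section
/- Let G be an abelian group, let g ∈ G \ {0}, and let H = B±({g}). (1) If the order of g is even or infinite, then H is isomorphic (as a monoid) to (ℕ₀, +); in particular Δ(H) = ∅. (2) If the order of g is odd, then H is isomorphic to the numerical monoid ⟨2, ord(g)⟩ ⊆ (ℕ₀, +) generated by 2 and ord(g); in particular Δ(H) = {ord(g) − 2}. -/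
open Multiset

variable {G : Type*} [AddCommGroup G]

-- ================= AUX =================
section Aux

variable {g : G}

/-- condition for `replicate n g` to be a pm zero-sum sequence -/
def Cnd (g : G) (n : ℕ) : Prop := ∃ a b : ℕ, a + b = n ∧ a • g = b • g

lemma mem_pmzs_iff {S : Multiset G} :
    S ∈ PMZS ({g} : Set G) ↔ S = replicate (card S) g ∧ Cnd g (card S) := by
  constructor
  · rintro ⟨hall, S₁, S₂, rfl, hsum⟩
    have hS : ∀ x ∈ S₁ + S₂, x = g := fun x hx => hall x hx
    have h1 : S₁ = replicate (card S₁) g :=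
      eq_replicate_card.2 fun x hx => hS x (mem_add.2 (Or.inl hx))
    have h2 : S₂ = replicate (card S₂) g :=
      eq_replicate_card.2 fun x hx => hS x (mem_add.2 (Or.inr hx))
    refine ⟨eq_replicate_card.2 hS, card S₁, card S₂, (card_add _ _).symm, ?_⟩
    rw [h1, h2, sum_replicate, sum_replicate] at hsum
    exact hsum
  · rintro ⟨hrep, a, b, hab, hsg⟩
    refine ⟨fun x hx => ?_, replicate a g, replicate b g, ?_, ?_⟩
    · rw [hrep] at hx; exact eq_of_mem_replicate hx
    · rw [hrep, ← hab, ← replicate_add]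
    · rw [sum_replicate, sum_replicate]; exact hsg

lemma rep_mem_iff (k : ℕ) : replicate k g ∈ PMZS ({g} : Set G) ↔ Cnd g k := by
  rw [mem_pmzs_iff, card_replicate]
  exact ⟨fun h => h.2, fun h => ⟨rfl, h⟩⟩

lemma smul_eq_smul_iff (a b : ℕ) :
    a • g = b • g ↔ (addOrderOf g : ℤ) ∣ (a : ℤ) - b := by
  rw [addOrderOf_dvd_iff_zsmul_eq_zero, sub_smul, natCast_zsmul, natCast_zsmul, sub_eq_zero]

lemma cnd_even (hm : addOrderOf g = 0 ∨ Even (addOrderOf g)) (n : ℕ) :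
    Cnd g n ↔ Even n := by
  constructor
  · rintro ⟨a, b, rfl, hab⟩
    rw [smul_eq_smul_iff] at hab
    rcases hm with h0 | ⟨k, hk⟩
    · rw [h0] at hab
      have : (a : ℤ) = b := by
        have := zero_dvd_iff.mp (by exact_mod_cast hab)
        omega
      have hab' : a = b := by exact_mod_cast this
      exact ⟨a, by omega⟩
    · obtain ⟨t, ht⟩ := hab
      rw [hk] at ht
      have ht' : (a : ℤ) - b = 2 * ((k : ℤ) * t) := by push_cast at ht; rw [ht]; ring
      obtain ⟨u, hu⟩ : ∃ u : ℤ, (a : ℤ) - b = 2 * u := ⟨_, ht'⟩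
      rw [Nat.even_add, Nat.even_iff, Nat.even_iff]
      omega
  · rintro ⟨k, hk⟩; exact ⟨k, k, by omega, rfl⟩

lemma cnd_odd_mp_aux {a b : ℕ} (hba : b ≤ a) (hab : a • g = b • g) (hne : ¬ Even (a + b)) :
    addOrderOf g ≤ a + b := by
  have h0 : (a - b) • g = 0 := by
    have : (a - b) • g + b • g = a • g := by
      rw [← add_nsmul, Nat.sub_add_cancel hba]
    rw [hab] at this
    exact add_right_cancel (this.trans (zero_add (b • g)).symm)
  have hdvd : addOrderOf g ∣ a - b := addOrderOf_dvd_iff_nsmul_eq_zero.mpr h0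
  have hne2 : a - b ≠ 0 := by
    intro h
    exact hne ⟨a, by omega⟩
  exact le_trans (Nat.le_of_dvd (by omega) hdvd) (by omega)

lemma cnd_odd (hm : Odd (addOrderOf g)) (n : ℕ) :
    Cnd g n ↔ Even n ∨ addOrderOf g ≤ n := by
  constructor
  · rintro ⟨a, b, rfl, hab⟩
    rcases Nat.even_or_odd (a + b) with he | ho
    · exact Or.inl he
    · right
      have hne : ¬ Even (a + b) := Nat.not_even_iff_odd.mpr ho
      rcases le_total b a with h | h
      · exact cnd_odd_mp_aux h hab hne
      · have := cnd_odd_mp_aux h hab.symm (by rwa [Nat.add_comm] at hne)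
        omega
  · rintro (⟨k, hk⟩ | hle)
    · exact ⟨k, k, by omega, rfl⟩
    · rcases Nat.even_or_odd n with ⟨k, hk⟩ | ⟨i, hi⟩
      · exact ⟨k, k, by omega, rfl⟩
      · obtain ⟨j, hj⟩ := hm
        refine ⟨(i - j) + addOrderOf g, i - j, by omega, ?_⟩
        rw [add_nsmul, addOrderOf_nsmul_eq_zero, add_zero]

lemma order_ne_one (hg : g ≠ 0) : addOrderOf g ≠ 1 := by
  intro h
  have := addOrderOf_nsmul_eq_zero g
  rw [h, one_nsmul] at this
  exact hg this

-- list lemmas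

lemma list_sum_card (l : List (Multiset G)) : card l.sum = (l.map card).sum := by
  induction l with
  | nil => simp
  | cons A t ih => simp [ih]

lemma list_sum_rep (l : List (Multiset G)) (h : ∀ A ∈ l, ∃ k, A = replicate k g) :
    l.sum = replicate (card l.sum) g := by
  rw [eq_replicate_card]
  induction l with
  | nil => simp
  | cons A t ih =>
    intro x hx
    rw [List.sum_cons, mem_add] at hx
    rcases hx with hx | hx
    · obtain ⟨k, rfl⟩ := h A (List.mem_cons_self)
      exact eq_of_mem_replicate hx
    · exact ih (fun B hB => h B (List.mem_cons_of_mem _ hB)) x hx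

lemma count_two_m (m : ℕ) (cl : List ℕ) (h : ∀ c ∈ cl, c = 2 ∨ c = m) :
    ∃ x y : ℕ, x + y = cl.length ∧ 2 * x + m * y = cl.sum := by
  induction cl with
  | nil => exact ⟨0, 0, by simp, by simp⟩
  | cons c t ih =>
    obtain ⟨x, y, hl, hs⟩ := ih (fun c hc => h c (List.mem_cons_of_mem _ hc))
    rcases h c (List.mem_cons_self) with rfl | rfl
    · exact ⟨x + 1, y, by simp; omega, by simp [List.sum_cons]; omega⟩
    · refine ⟨x, y + 1, by simp; omega, ?_⟩
      rw [List.sum_cons, ← hs]; ring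

lemma nsmul_rep (k c : ℕ) : k • replicate c g = replicate (k * c) g := by
  induction k with
  | zero => simp
  | succ k ih =>
    rw [succ_nsmul, ih, ← replicate_add]
    congr 1
    ring

lemma rep_factor (x y c d : ℕ) :
    (List.replicate x (replicate c g) ++ List.replicate y (replicate d g)).sum
      = replicate (x * c + y * d) g := by
  rw [List.sum_append, List.sum_replicate, List.sum_replicate, nsmul_rep, nsmul_rep,
    ← replicate_add]

end Aux

section Atoms
variable {g : G}

lemma par {m x y n : ℕ} (hm : Odd m) (h : 2*x + m*y = n) : y % 2 = n % 2 := by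
  have h2 : m % 2 = 1 := Nat.odd_iff.mp hm
  have hz : (m*y) % 2 = y % 2 := by rw [Nat.mul_mod, h2]; omega
  obtain ⟨z, hz1, hz2⟩ : ∃ z, 2*x + z = n ∧ z % 2 = y % 2 := ⟨m*y, h, hz⟩
  omega

lemma rep_card_ne_zero {k : ℕ} (h : (replicate k g : Multiset G) = 0) : k = 0 := by
  have := congrArg card h
  simpa using this

lemma atom_even (hm : addOrderOf g = 0 ∨ Even (addOrderOf g)) {A : Multiset G}
    (hA : IsPMAtom (PMZS ({g} : Set G)) A) : A = replicate 2 g := by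
  obtain ⟨hmem, hne, hmin⟩ := hA
  obtain ⟨hrep, hc⟩ := mem_pmzs_iff.mp hmem
  rw [cnd_even hm] at hc
  set n := card A with hn
  have hn0 : n ≠ 0 := fun h => hne (by rw [hrep, h]; simp)
  by_cases h2 : n = 2
  · rw [h2] at hrep; exact hrep
  · exfalso
    have h4 : 4 ≤ n := by obtain ⟨k, hk⟩ := hc; omega
    have hB : replicate 2 g ∈ PMZS ({g} : Set G) :=
      (rep_mem_iff 2).2 ((cnd_even hm 2).2 ⟨1, rfl⟩)
    have hC : replicate (n-2) g ∈ PMZS ({g} : Set G) :=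
      (rep_mem_iff _).2 ((cnd_even hm _).2 (by obtain ⟨k, hk⟩ := hc; exact ⟨k-1, by omega⟩))
    rcases hmin _ _ hB hC (by rw [hrep, ← replicate_add]; congr 1; omega) with h | h
    · exact absurd (rep_card_ne_zero h) (by omega)
    · exact absurd (rep_card_ne_zero h) (by omega)

lemma atom_odd (hg : g ≠ 0) (hm : Odd (addOrderOf g)) (A : Multiset G) :
    IsPMAtom (PMZS ({g} : Set G)) A ↔
      A = replicate 2 g ∨ A = replicate (addOrderOf g) g := by
  set m := addOrderOf g with hmdef
  have hm3 : 3 ≤ m := by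
    have h1 := order_ne_one hg
    obtain ⟨j, hj⟩ := hm
    omega
  constructor
  · rintro ⟨hmem, hne, hmin⟩
    obtain ⟨hrep, hc⟩ := mem_pmzs_iff.mp hmem
    rw [cnd_odd hm] at hc
    set n := card A with hn
    have hn0 : n ≠ 0 := fun h => hne (by rw [hrep, h]; simp)
    have hdec : ∀ k, 0 < k → k < n → Cnd g k → Cnd g (n - k) → False := by
      intro k hk0 hkn hck hcnk
      rcases hmin (replicate k g) (replicate (n-k) g) ((rep_mem_iff _).2 hck)
        ((rep_mem_iff _).2 hcnk)
        (by rw [hrep, ← replicate_add]; congr 1; omega) with h | h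
      · exact absurd (rep_card_ne_zero h) (by omega)
      · exact absurd (rep_card_ne_zero h) (by omega)
    rcases Nat.even_or_odd n with he | ho
    · left
      by_contra hne2
      have h2 : n ≠ 2 := fun h => hne2 (by rw [hrep, h])
      have h4 : 4 ≤ n := by obtain ⟨k, hk⟩ := he; omega
      exact hdec 2 (by omega) (by omega) ((cnd_odd hm 2).2 (Or.inl ⟨1, rfl⟩))
        ((cnd_odd hm _).2 (Or.inl (by obtain ⟨k, hk⟩ := he; exact ⟨k-1, by omega⟩)))
    · have hmn : m ≤ n := by
        rcases hc with he | h
        · exact absurd he (Nat.not_even_iff_odd.mpr ho)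
        · exact h
      right
      by_contra hne2
      have hnm : n ≠ m := fun h => hne2 (by rw [hrep, h])
      have hm2 : m + 2 ≤ n := by
        obtain ⟨j, hj⟩ := hm; obtain ⟨i, hi⟩ := ho; omega
      exact hdec m (by omega) (by omega) ((cnd_odd hm m).2 (Or.inr le_rfl))
        ((cnd_odd hm _).2 (Or.inl (by
          obtain ⟨j, hj⟩ := hm; obtain ⟨i, hi⟩ := ho; exact ⟨i - j, by omega⟩)))
  · have hatom2 : IsPMAtom (PMZS ({g} : Set G)) (replicate 2 g) := by
      refine ⟨(rep_mem_iff _).2 ((cnd_odd hm 2).2 (Or.inl ⟨1, rfl⟩)), ?_, ?_⟩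
      · intro h; exact absurd (rep_card_ne_zero h) (by omega)
      · intro B C hB hC hBC
        obtain ⟨hrB, hcB⟩ := mem_pmzs_iff.mp hB
        obtain ⟨hrC, hcC⟩ := mem_pmzs_iff.mp hC
        have hcard : card B + card C = 2 := by
          have := congrArg card hBC
          simp only [card_add, card_replicate] at this
          omega
        rw [cnd_odd hm] at hcB hcC
        have h1B : card B ≠ 1 := by
          intro h; rw [h] at hcB
          rcases hcB with ⟨k, hk⟩ | h'; omega; omega
        rcases Nat.eq_zero_or_pos (card B) with h0 | hpos
        · left; rwa [card_eq_zero] at h0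
        · right
          have : card C = 0 := by omega
          rwa [card_eq_zero] at this
    have hatomm : IsPMAtom (PMZS ({g} : Set G)) (replicate m g) := by
      refine ⟨(rep_mem_iff _).2 ((cnd_odd hm m).2 (Or.inr le_rfl)), ?_, ?_⟩
      · intro h; exact absurd (rep_card_ne_zero h) (by omega)
      · intro B C hB hC hBC
        obtain ⟨hrB, hcB⟩ := mem_pmzs_iff.mp hB
        obtain ⟨hrC, hcC⟩ := mem_pmzs_iff.mp hC
        have hcard : card B + card C = m := by
          have := congrArg card hBC
          simp only [card_add, card_replicate] at this
          omega
        rw [cnd_odd hm] at hcB hcC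
        obtain ⟨j, hj⟩ := hm
        rcases Nat.even_or_odd (card B) with ⟨s, hs⟩ | ⟨s, hs⟩
        · left
          have hCodd : ¬ Even (card C) := by
            rintro ⟨t, ht⟩; omega
          have hmC : m ≤ card C := by
            rcases hcC with h | h
            · exact absurd h hCodd
            · exact h
          have : card B = 0 := by omega
          rwa [card_eq_zero] at this
        · right
          have hmB : m ≤ card B := by
            rcases hcB with ⟨t, ht⟩ | h
            · omega
            · exact h
          have : card C = 0 := by omega
          rwa [card_eq_zero] at this
    rintro (rfl | rfl)
    · exact hatom2
    · exact hatomm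

lemma lengthset_odd (hg : g ≠ 0) (hm : Odd (addOrderOf g)) (n k : ℕ) :
    k ∈ LengthSet (PMZS ({g} : Set G)) (replicate n g) ↔
      ∃ x y : ℕ, x + y = k ∧ 2 * x + addOrderOf g * y = n := by
  set m := addOrderOf g with hmdef
  constructor
  · rintro ⟨l, hat, hsum, hlen⟩
    have hcl : ∀ c ∈ l.map card, c = 2 ∨ c = m := by
      intro c hc
      rw [List.mem_map] at hc
      obtain ⟨A, hA, rfl⟩ := hc
      rcases (atom_odd hg hm A).1 (hat A hA) with h | h
      · left; rw [h, card_replicate]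
      · right; rw [h, card_replicate]
    obtain ⟨x, y, hxy, hs⟩ := count_two_m m (l.map card) hcl
    rw [List.length_map, hlen] at hxy
    rw [← list_sum_card, hsum, card_replicate] at hs
    exact ⟨x, y, hxy, hs⟩
  · rintro ⟨x, y, hxy, hs⟩
    refine ⟨List.replicate x (replicate 2 g) ++ List.replicate y (replicate m g), ?_, ?_, ?_⟩
    · intro A hA
      rw [List.mem_append] at hA
      rcases hA with h | h
      · rw [List.eq_of_mem_replicate h]
        exact (atom_odd hg hm _).2 (Or.inl rfl)
      · rw [List.eq_of_mem_replicate h]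
        exact (atom_odd hg hm _).2 (Or.inr rfl)
    · rw [rep_factor]
      congr 1
      rw [← hs]; ring
    · rw [List.length_append, List.length_replicate, List.length_replicate]
      exact hxy

lemma lengthset_even_card (hm : addOrderOf g = 0 ∨ Even (addOrderOf g)) {a : Multiset G} {k : ℕ}
    (hk : k ∈ LengthSet (PMZS ({g} : Set G)) a) : 2 * k = card a := by
  obtain ⟨l, hat, rfl, hlen⟩ := hk
  rw [list_sum_card]
  have hall : ∀ c ∈ l.map card, c = 2 := by
    intro c hc
    rw [List.mem_map] at hc
    obtain ⟨A, hA, rfl⟩ := hc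
    rw [atom_even hm (hat A hA), card_replicate]
  have hrep2 : l.map card = List.replicate k 2 :=
    List.eq_replicate_iff.mpr ⟨by rw [List.length_map, hlen], hall⟩
  rw [hrep2, List.sum_replicate, smul_eq_mul]
  omega

lemma mem_closure2m {m n : ℕ} (hmo : Odd m) (h : Even n ∨ m ≤ n) :
    n ∈ AddSubmonoid.closure ({2, m} : Set ℕ) := by
  rw [AddSubmonoid.mem_closure_pair]
  rcases Nat.even_or_odd n with ⟨k, hk⟩ | ⟨i, hi⟩
  · exact ⟨k, 0, by simp only [smul_eq_mul]; omega⟩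
  · have hmn : m ≤ n := by
      rcases h with ⟨k, hk⟩ | h
      · omega
      · exact h
    obtain ⟨j, hj⟩ := hmo
    refine ⟨i - j, 1, ?_⟩
    simp only [smul_eq_mul]
    omega

lemma closure2m_cnd {m n : ℕ} (h : n ∈ AddSubmonoid.closure ({2, m} : Set ℕ)) :
    Even n ∨ m ≤ n := by
  rw [AddSubmonoid.mem_closure_pair] at h
  obtain ⟨x, y, hxy⟩ := h
  simp only [smul_eq_mul] at hxy
  rcases Nat.eq_zero_or_pos y with rfl | hy
  · left
    simp only [Nat.zero_mul, Nat.add_zero] at hxy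
    exact ⟨x, by omega⟩
  · right
    have h1 : 1 * m ≤ y * m := Nat.mul_le_mul hy (le_refl m)
    have h2 : y * m ≤ n := by
      have := Nat.le_add_left (y * m) (x * 2)
      rwa [hxy] at this
    omega

end Atoms


/-- For `g ∈ G \ {0}` and `H = B±({g})`: (1) if the order of `g` is infinite or even then
`H ≅ (ℕ, +)` and `Δ(H) = ∅`; (2) if the order of `g` is odd then `H` is isomorphic to the
numerical monoid `⟨2, ord g⟩ ⊆ (ℕ, +)` and `Δ(H) = {ord g - 2}`. -/
theorem stmt_5 (G : Type*) [AddCommGroup G] (g : G) (hg : g ≠ 0) :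
    ((addOrderOf g = 0 ∨ Even (addOrderOf g)) →
      Nonempty ((PMZS ({g} : Set G)) ≃+ ℕ) ∧ DeltaM (PMZS ({g} : Set G)) = ∅) ∧
    (Odd (addOrderOf g) →
      Nonempty ((PMZS ({g} : Set G)) ≃+
        (AddSubmonoid.closure ({2, addOrderOf g} : Set ℕ))) ∧
      DeltaM (PMZS ({g} : Set G)) = {addOrderOf g - 2}) := by
  constructor
  · intro hm
    have heven : ∀ S ∈ PMZS ({g} : Set G), S = replicate (card S) g ∧ Even (card S) := by
      intro S hS
      obtain ⟨h1, h2⟩ := mem_pmzs_iff.mp hS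
      exact ⟨h1, (cnd_even hm _).1 h2⟩
    constructor
    · refine ⟨{
          toFun := fun S => card S.1 / 2
          invFun := fun k => ⟨replicate (2*k) g,
            (rep_mem_iff _).2 ((cnd_even hm _).2 ⟨k, by omega⟩)⟩
          left_inv := ?_
          right_inv := ?_
          map_add' := ?_ }⟩
      · rintro ⟨S, hS⟩
        obtain ⟨h1, k, hk⟩ := heven S hS
        apply Subtype.ext
        show replicate (2 * (card S / 2)) g = S
        have h2 : 2 * (card S / 2) = card S := by omega
        rw [h2]
        exact h1.symm
      · intro k
        show card (replicate (2*k) g) / 2 = k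
        rw [card_replicate]
        omega
      · rintro ⟨S, hS⟩ ⟨T, hT⟩
        obtain ⟨-, k, hk⟩ := heven S hS
        obtain ⟨-, t, ht⟩ := heven T hT
        show card (S + T) / 2 = card S / 2 + card T / 2
        rw [card_add]
        omega
    · ext d
      simp only [Set.mem_empty_iff_false, iff_false]
      rintro ⟨a, ha, hd, ℓ, hℓ, hℓd, -⟩
      have h1 := lengthset_even_card hm hℓ
      have h2 := lengthset_even_card hm hℓd
      omega
  · intro hm
    have hm3 : 3 ≤ addOrderOf g := by
      have h1 := order_ne_one hg
      obtain ⟨j, hj⟩ := hm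
      omega
    set m := addOrderOf g with hmdef
    constructor
    · refine ⟨{
          toFun := fun S => ⟨card S.1,
            mem_closure2m hm ((cnd_odd hm _).1 (mem_pmzs_iff.mp S.2).2)⟩
          invFun := fun k => ⟨replicate k.1 g,
            (rep_mem_iff _).2 ((cnd_odd hm _).2 (closure2m_cnd k.2))⟩
          left_inv := ?_
          right_inv := ?_
          map_add' := ?_ }⟩
      · rintro ⟨S, hS⟩
        apply Subtype.ext
        exact ((mem_pmzs_iff.mp hS).1).symm
      · rintro ⟨k, hk⟩
        apply Subtype.ext
        exact card_replicate _ _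
      · rintro ⟨S, hS⟩ ⟨T, hT⟩
        apply Subtype.ext
        exact card_add S T
    · ext d
      simp only [Set.mem_singleton_iff]
      constructor
      · rintro ⟨a, ha, hd, ℓ, hℓ, hℓd, hminl⟩
        obtain ⟨hrep, hc⟩ := mem_pmzs_iff.mp ha
        set n := card a with hn
        rw [hrep] at hℓ hℓd hminl
        rw [lengthset_odd hg hm] at hℓ hℓd
        obtain ⟨x, y, hxy, hs⟩ := hℓ
        obtain ⟨x', y', hxy', hs'⟩ := hℓd
        have hp : y % 2 = n % 2 := par hm hs
        have hp' : y' % 2 = n % 2 := par hm hs'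
        obtain ⟨e, he⟩ : ∃ e, m = e + 2 := ⟨m - 2, by omega⟩
        have key : ∀ u v : ℕ, 2*u + m*v = n → 2*(u+v) + e*v = n := by
          intro u v h
          rw [← h, he]; ring
        have k1 := key x y hs
        have k2 := key x' y' hs'
        rw [hxy] at k1
        rw [hxy'] at k2
        have hyy : y' < y := by
          rcases Nat.lt_or_ge y' y with h | h
          · exact h
          · exfalso
            have h1 : e * y ≤ e * y' := Nat.mul_le_mul (le_refl e) h
            linarith
        have hy2 : y' + 2 ≤ y := by omega
        have h2 : e * (y' + 2) ≤ e * y := Nat.mul_le_mul (le_refl e) hy2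
        have h3 : e * (y' + 2) = e * y' + 2 * e := by ring
        have hle : e ≤ d := by linarith
        obtain ⟨y₂, rfl⟩ : ∃ y₂, y = y₂ + 2 := ⟨y - 2, by omega⟩
        have hb : (x + m) + y₂ ∈ LengthSet (PMZS ({g} : Set G)) (replicate n g) := by
          rw [lengthset_odd hg hm]
          exact ⟨x + m, y₂, rfl, by rw [← hs]; ring⟩
        have hlt : ℓ < (x + m) + y₂ := by omega
        have hge := hminl _ hb hlt
        omega
      · rintro rfl
        refine ⟨replicate (2*m) g,
          (rep_mem_iff _).2 ((cnd_odd hm _).2 (Or.inl ⟨m, by ring⟩)), by omega, 2, ?_, ?_, ?_⟩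
        · rw [lengthset_odd hg hm]
          exact ⟨0, 2, rfl, by ring⟩
        · rw [show 2 + (m - 2) = m from by omega, lengthset_odd hg hm]
          exact ⟨m, 0, by omega, by ring⟩
        · rintro b hb hlt
          rw [lengthset_odd hg hm] at hb
          obtain ⟨x, y, hxy, hs⟩ := hb
          have hy3 : y ≤ 2 := by
            by_contra hy
            push_neg at hy
            have h1 : m * 3 ≤ m * y := Nat.mul_le_mul (le_refl m) (by omega)
            have h2 : m * y ≤ 2 * m := by linarith
            linarith
          obtain ⟨j, hj⟩ := hm
          interval_cases y <;> omega
end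

section
/- Let G be an abelian group, G₀ ⊆ G a subset, and H = B±(G₀). Then {ord(g) − 2 : g ∈ G₀, ord(g) ≥ 3 odd} ⊆ Δ(H). -/
open Multiset

variable {G : Type*} [AddCommGroup G]

section Helpers

variable {g : G}

/-- Structure of PM-zero-sum multisets of copies of `g`. -/
lemma pm_replicate {k : ℕ} (h : IsPMZeroSum (replicate k g)) :
    ∃ k₁ k₂ : ℕ, k₁ + k₂ = k ∧ (addOrderOf g : ℤ) ∣ (k₁ : ℤ) - k₂ := by
  obtain ⟨S₁, S₂, hsplit, hsum⟩ := h
  have h1 : S₁ = replicate (Multiset.card S₁) g := by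
    apply Multiset.eq_replicate_of_mem
    intro b hb
    have : b ∈ replicate k g := by rw [hsplit]; exact Multiset.mem_add.mpr (Or.inl hb)
    exact Multiset.eq_of_mem_replicate this
  have h2 : S₂ = replicate (Multiset.card S₂) g := by
    apply Multiset.eq_replicate_of_mem
    intro b hb
    have : b ∈ replicate k g := by rw [hsplit]; exact Multiset.mem_add.mpr (Or.inr hb)
    exact Multiset.eq_of_mem_replicate this
  refine ⟨Multiset.card S₁, Multiset.card S₂, ?_, ?_⟩
  · have := congrArg Multiset.card hsplit
    simpa [Multiset.card_replicate] using this.symm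
  · rw [addOrderOf_dvd_iff_zsmul_eq_zero, sub_smul]
    rw [h1] at hsum; rw [h2] at hsum
    simp only [Multiset.sum_replicate] at hsum
    rw [natCast_zsmul, natCast_zsmul, hsum, sub_self]

lemma odd_pm_ge (hodd : Odd (addOrderOf g)) (hn : 3 ≤ addOrderOf g) {k : ℕ}
    (hk : Odd k) (h : IsPMZeroSum (replicate k g)) : addOrderOf g ≤ k := by
  obtain ⟨k₁, k₂, hsum, hdvd⟩ := pm_replicate h
  set n := addOrderOf g with hn'
  obtain ⟨m, hm⟩ := hk
  have hne : (k₁ : ℤ) - k₂ ≠ 0 := by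
    intro hzero
    omega
  have := Int.le_of_dvd (abs_pos.mpr hne) ((dvd_abs _ _).mpr hdvd)
  rcases abs_cases ((k₁ : ℤ) - k₂) with ⟨he, _⟩ | ⟨he, _⟩ <;> rw [he] at this <;> omega



end Helpers

section Helpers2

variable {g : G} {G₀ : Set G}

lemma mem_G0_replicate (hg : g ∈ G₀) (k : ℕ) : ∀ x ∈ replicate k g, x ∈ G₀ := by
  intro x hx; rwa [Multiset.eq_of_mem_replicate hx]

lemma even_mem (hg : g ∈ G₀) {k : ℕ} (hk : Even k) : replicate k g ∈ PMZS G₀ := by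
  obtain ⟨m, rfl⟩ := hk
  exact ⟨mem_G0_replicate hg _, replicate m g, replicate m g, (Multiset.replicate_add m m g), rfl⟩

lemma ord_mem (hg : g ∈ G₀) : replicate (addOrderOf g) g ∈ PMZS G₀ := by
  refine ⟨mem_G0_replicate hg _, replicate (addOrderOf g) g, 0, (add_zero _).symm, ?_⟩
  simp [Multiset.sum_replicate, addOrderOf_nsmul_eq_zero]

/-- Every multiset in `PMZS G₀` that is `≤ replicate m g` is itself a replicate of `g`. -/
lemma eq_replicate_of_le {S : Multiset G} {m : ℕ} (hle : S ≤ replicate m g) :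
    S = replicate (Multiset.card S) g :=
  Multiset.eq_replicate_of_mem fun b hb => Multiset.eq_of_mem_replicate (Multiset.mem_of_le hle hb)

lemma atom_two (hg : g ∈ G₀) (hodd : Odd (addOrderOf g)) (hn : 3 ≤ addOrderOf g) :
    IsPMAtom (PMZS G₀) (replicate 2 g) := by
  refine ⟨even_mem hg ⟨1, rfl⟩, by simp, ?_⟩
  rintro B C hB hC hBC
  by_contra hcon
  push_neg at hcon
  obtain ⟨hB0, hC0⟩ := hcon
  have hcards : Multiset.card B + Multiset.card C = 2 := by
    have := congrArg Multiset.card hBC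
    simpa using this.symm
  have hBle : B ≤ replicate 2 g := le_trans (le_add_right B C) (le_of_eq hBC.symm)
  have hB1 : B = replicate (Multiset.card B) g := eq_replicate_of_le hBle
  have hcB : Multiset.card B = 1 := by
    have h1 : Multiset.card B ≠ 0 := fun h => hB0 (Multiset.card_eq_zero.mp h)
    have h2 : Multiset.card C ≠ 0 := fun h => hC0 (Multiset.card_eq_zero.mp h)
    omega
  have : addOrderOf g ≤ Multiset.card B := by
    apply odd_pm_ge hodd hn (hcB ▸ ⟨0, rfl⟩)
    rw [← hB1]; exact hB.2
  omega

lemma atom_ord (hg : g ∈ G₀) (hodd : Odd (addOrderOf g)) (hn : 3 ≤ addOrderOf g) :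
    IsPMAtom (PMZS G₀) (replicate (addOrderOf g) g) := by
  refine ⟨ord_mem hg, ?_, ?_⟩
  · intro h; have := congrArg Multiset.card h; simp only [Multiset.card_replicate, Multiset.card_zero] at this; omega
  rintro B C hB hC hBC
  by_contra hcon
  push_neg at hcon
  obtain ⟨hB0, hC0⟩ := hcon
  have hcards : Multiset.card B + Multiset.card C = addOrderOf g := by
    have := congrArg Multiset.card hBC
    simpa using this.symm
  have hBle : B ≤ replicate (addOrderOf g) g := le_trans (le_add_right B C) (le_of_eq hBC.symm)
  have hCle : C ≤ replicate (addOrderOf g) g := le_trans (le_add_left C B) (le_of_eq hBC.symm)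
  have hB1 : B = replicate (Multiset.card B) g := eq_replicate_of_le hBle
  have hC1 : C = replicate (Multiset.card C) g := eq_replicate_of_le hCle
  have h1 : Multiset.card B ≠ 0 := fun h => hB0 (Multiset.card_eq_zero.mp h)
  have h2 : Multiset.card C ≠ 0 := fun h => hC0 (Multiset.card_eq_zero.mp h)
  obtain ⟨m, hm⟩ := hodd
  rcases Nat.even_or_odd (Multiset.card B) with hpar | hpar
  · have hpc : Odd (Multiset.card C) := by
      rcases hpar with ⟨u, hu⟩; exact ⟨m - u, by omega⟩
    have : addOrderOf g ≤ Multiset.card C := by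
      apply odd_pm_ge ⟨m, hm⟩ hn hpc
      rw [← hC1]; exact hC.2
    omega
  · have : addOrderOf g ≤ Multiset.card B := by
      apply odd_pm_ge ⟨m, hm⟩ hn hpar
      rw [← hB1]; exact hB.2
    omega

/-- Each atom dividing `replicate m g` has card 2 or `addOrderOf g`. -/
lemma atom_card (hodd : Odd (addOrderOf g)) (hn : 3 ≤ addOrderOf g) {A : Multiset G} {m : ℕ}
    (hA : IsPMAtom (PMZS G₀) A) (hle : A ≤ replicate m g) :
    A = replicate (Multiset.card A) g ∧
      (Multiset.card A = 2 ∨ Multiset.card A = addOrderOf g) := by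
  obtain ⟨hAH, hA0, hAatom⟩ := hA
  have hArep : A = replicate (Multiset.card A) g := eq_replicate_of_le hle
  refine ⟨hArep, ?_⟩
  have hg : g ∈ G₀ := by
    have hc : Multiset.card A ≠ 0 := fun h => hA0 (Multiset.card_eq_zero.mp h)
    apply hAH.1
    rw [hArep]
    exact Multiset.mem_replicate.mpr ⟨hc, rfl⟩
  set c := Multiset.card A with hc'
  have hc : c ≠ 0 := fun h => hA0 (Multiset.card_eq_zero.mp h)
  rcases Nat.even_or_odd c with hpar | hpar
  · left
    by_contra hne
    have h4 : 4 ≤ c := by obtain ⟨u, hu⟩ := hpar; omega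
    have hsplit : A = replicate 2 g + replicate (c - 2) g := by
      rw [hArep, ← Multiset.replicate_add]; congr 1; omega
    rcases hAatom _ _ (even_mem hg ⟨1, rfl⟩)
      (even_mem hg (by obtain ⟨u, hu⟩ := hpar; exact ⟨u - 1, by omega⟩)) hsplit with h | h
    · simpa using congrArg Multiset.card h
    · have := congrArg Multiset.card h
      simp at this; omega
  · right
    have hge : addOrderOf g ≤ c := by
      apply odd_pm_ge hodd hn hpar
      rw [← hArep]; exact hAH.2
    by_contra hne
    have hgt : addOrderOf g < c := lt_of_le_of_ne hge (fun h => hne h.symm)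
    have hsplit : A = replicate (addOrderOf g) g + replicate (c - addOrderOf g) g := by
      rw [hArep, ← Multiset.replicate_add]; congr 1; omega
    have heven : Even (c - addOrderOf g) := by
      obtain ⟨u, hu⟩ := hpar; obtain ⟨v, hv⟩ := hodd; exact ⟨u - v, by omega⟩
    rcases hAatom _ _ (ord_mem hg) (even_mem hg heven) hsplit with h | h
    · have := congrArg Multiset.card h
      simp only [Multiset.card_replicate, Multiset.card_zero] at this; omega
    · have := congrArg Multiset.card h
      simp at this; omega

end Helpers2

section Main

variable {g : G} {G₀ : Set G}

lemma count_lemma (n : ℕ) : ∀ (l : List (Multiset G)),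
    (∀ A ∈ l, ∃ c : ℕ, A = replicate c g ∧ (c = 2 ∨ c = n)) →
    ∃ x, x ≤ l.length ∧ Multiset.card l.sum + 2 * x = 2 * l.length + n * x := by
  intro l
  induction l with
  | nil => intro _; exact ⟨0, by simp⟩
  | cons A t ih =>
    intro h
    obtain ⟨x, hx, hsum⟩ := ih (fun B hB => h B (List.mem_cons_of_mem A hB))
    obtain ⟨c, hc, hc2⟩ := h A List.mem_cons_self
    rcases hc2 with rfl | rfl
    · refine ⟨x, by simp; omega, ?_⟩
      simp only [List.sum_cons, Multiset.card_add, hc, Multiset.card_replicate,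
        List.length_cons]
      omega
    · refine ⟨x + 1, by simp; omega, ?_⟩
      simp only [List.sum_cons, Multiset.card_add, hc, Multiset.card_replicate,
        List.length_cons]
      rw [Nat.mul_succ c x]
      omega

lemma length_cases (hodd : Odd (addOrderOf g)) (hn : 3 ≤ addOrderOf g) {k : ℕ}
    (hk : k ∈ LengthSet (PMZS G₀) (replicate (2 * addOrderOf g) g)) :
    k = 2 ∨ k = addOrderOf g := by
  set n := addOrderOf g with hn'
  obtain ⟨l, hatoms, hsum, hlen⟩ := hk
  have hrep : ∀ A ∈ l, ∃ c : ℕ, A = replicate c g ∧ (c = 2 ∨ c = n) := by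
    intro A hA
    have hle : A ≤ replicate (2 * n) g := by
      rw [← hsum]
      have h0 : ∀ B ∈ l, (0 : Multiset G) ≤ B := fun B _ => Multiset.zero_le B
      exact List.single_le_sum h0 A hA
    obtain ⟨hA1, hA2⟩ := atom_card hodd hn (hatoms A hA) hle
    exact ⟨Multiset.card A, hA1, hA2⟩
  obtain ⟨x, hx, heq⟩ := count_lemma n l hrep
  rw [hsum, hlen] at heq
  simp only [Multiset.card_replicate] at heq
  -- heq : 2 * n + 2 * x = 2 * k + n * x
  rcases Nat.lt_or_ge x 2 with hx2 | hx2
  · interval_cases x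
    · right; omega
    · exfalso; obtain ⟨m, hm⟩ := hodd; omega
  · have h1 : n * 2 ≤ n * x := Nat.mul_le_mul_left n hx2
    have hxk : x ≤ k := hlen ▸ hx
    have h2 : n * x = 2 * n := by omega
    have hx2' : x = 2 := by
      have : n * x = n * 2 := by omega
      exact Nat.eq_of_mul_eq_mul_left (by omega) this
    left; omega

lemma two_mem (hg : g ∈ G₀) (hodd : Odd (addOrderOf g)) (hn : 3 ≤ addOrderOf g) :
    2 ∈ LengthSet (PMZS G₀) (replicate (2 * addOrderOf g) g) := by
  refine ⟨[replicate (addOrderOf g) g, replicate (addOrderOf g) g], ?_, ?_, rfl⟩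
  · intro A hA
    simp only [List.mem_cons, List.mem_singleton, List.not_mem_nil, or_false] at hA
    rcases hA with rfl | rfl <;> exact atom_ord hg hodd hn
  · simp [← Multiset.replicate_add, two_mul]

lemma ord_mem_len (hg : g ∈ G₀) (hodd : Odd (addOrderOf g)) (hn : 3 ≤ addOrderOf g) :
    addOrderOf g ∈ LengthSet (PMZS G₀) (replicate (2 * addOrderOf g) g) := by
  refine ⟨List.replicate (addOrderOf g) (replicate 2 g), ?_, ?_, List.length_replicate⟩
  · intro A hA
    rw [List.eq_of_mem_replicate hA]
    exact atom_two hg hodd hn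
  · rw [List.sum_replicate, Multiset.nsmul_replicate, Nat.mul_comm]

end Main

/-- For `H = B±(G₀)`: `{ord g - 2 : g ∈ G₀, ord g ≥ 3 odd} ⊆ Δ(H)`. -/
theorem stmt_6 (G : Type*) [AddCommGroup G] (G₀ : Set G) :
    {d : ℕ | ∃ g ∈ G₀, Odd (addOrderOf g) ∧ 3 ≤ addOrderOf g ∧ d = addOrderOf g - 2} ⊆
      DeltaM (PMZS G₀) := by
  rintro d ⟨g, hg, hodd, hn, rfl⟩
  refine ⟨replicate (2 * addOrderOf g) g, even_mem hg ⟨addOrderOf g, two_mul _⟩, ?_⟩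
  refine ⟨by omega, 2, two_mem hg hodd hn, ?_, ?_⟩
  · have : 2 + (addOrderOf g - 2) = addOrderOf g := by omega
    rw [this]
    exact ord_mem_len hg hodd hn
  · intro b hb hlt
    rcases length_cases hodd hn hb with rfl | rfl
    · omega
    · omega
end

section
/- Let G be a finite abelian group of exponent n, where n is odd and at least 3, and let H = B±(G). Let D₁ = {d − 2 : d ∣ n, d ≥ 3} and let D₂ = {d' ∈ ℕ : d' ∣ d for some d ∈ D₁}. Then D₁ ⊆ Δ*(H) ⊆ D₂; in particular, max Δ*(H) = n − 2. -/
open Multiset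

variable {G : Type*} [AddCommGroup G]

/- ============ auxiliary lemmas ============ -/

lemma PM.mem_univ {T : Multiset G} : T ∈ PMZS (Set.univ : Set G) ↔ IsPMZeroSum T :=
  ⟨fun h => h.2, fun h => ⟨fun _ _ => Set.mem_univ _, h⟩⟩

lemma PM.doubling (R : Multiset G) : IsPMZeroSum (R + R) := ⟨R, R, rfl, rfl⟩

lemma PM.sub_replicate {T : Multiset G} {k : ℕ} {g : G} (h : T ≤ replicate k g) :
    T = replicate (Multiset.card T) g := by
  rw [Multiset.eq_replicate_card]
  exact fun b hb => Multiset.eq_of_mem_replicate (Multiset.mem_of_le h hb)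

lemma PM.repl_pm_iff {g : G} {d : ℕ} (hd : addOrderOf g = d) (hodd : Odd d) (k : ℕ) :
    IsPMZeroSum (replicate k g) ↔ (Even k ∨ d ≤ k) := by
  constructor
  · rintro ⟨S₁, S₂, hsplit, hsum⟩
    have h1 : S₁ = replicate (Multiset.card S₁) g :=
      PM.sub_replicate (hsplit ▸ le_add_right S₁ S₂)
    have h2 : S₂ = replicate (Multiset.card S₂) g :=
      PM.sub_replicate (hsplit ▸ le_add_left S₂ S₁)
    set a := Multiset.card S₁
    set b := Multiset.card S₂
    have hk : a + b = k := by
      have := congrArg Multiset.card hsplit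
      simpa using this.symm
    have hsum' : (a : ℤ) • g = (b : ℤ) • g := by
      rw [h1, h2] at hsum
      simp only [Multiset.sum_replicate] at hsum
      rw [natCast_zsmul, natCast_zsmul]
      exact hsum
    have hdvd : (d : ℤ) ∣ (a : ℤ) - b := by
      rw [← hd, addOrderOf_dvd_iff_zsmul_eq_zero, sub_zsmul, hsum']
      simp
    rcases eq_or_ne a b with h | h
    · exact Or.inl ⟨a, by omega⟩
    · refine Or.inr ?_
      have hne : (a : ℤ) - b ≠ 0 := sub_ne_zero.mpr (by exact_mod_cast h)
      have habs : (d : ℤ) ≤ |(a : ℤ) - b| :=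
        Int.le_of_dvd (abs_pos.mpr hne) ((dvd_abs _ _).mpr hdvd)
      have hle : |(a : ℤ) - b| ≤ (a : ℤ) + b := abs_sub_le_iff.mpr ⟨by omega, by omega⟩
      have : (d : ℤ) ≤ (k : ℤ) := by
        calc (d:ℤ) ≤ _ := habs
        _ ≤ (a:ℤ) + b := hle
        _ = k := by exact_mod_cast hk
      exact_mod_cast this
  · rintro (⟨m, rfl⟩ | hdk)
    · exact ⟨replicate m g, replicate m g, by rw [← Multiset.replicate_add], rfl⟩
    · rcases Nat.even_or_odd k with ⟨m, rfl⟩ | hko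
      · exact ⟨replicate m g, replicate m g, by rw [← Multiset.replicate_add], rfl⟩
      · have hkd : Even (k - d) := by
          rcases hodd with ⟨i, hi⟩; rcases hko with ⟨j, hj⟩
          exact ⟨j - i, by omega⟩
        rcases hkd with ⟨m, hm⟩
        refine ⟨replicate (m + d) g, replicate m g,
          by rw [← Multiset.replicate_add]; congr 1; omega, ?_⟩
        simp only [Multiset.sum_replicate, add_nsmul]
        rw [← hd, addOrderOf_nsmul_eq_zero, add_zero]

lemma PM.mem_singleton_iff {g : G} {T : Multiset G} :
    T ∈ PMZS ({g} : Set G) ↔ T = replicate (Multiset.card T) g ∧ IsPMZeroSum T := by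
  constructor
  · rintro ⟨h1, h2⟩
    exact ⟨Multiset.eq_replicate_card.mpr fun b hb => h1 b hb, h2⟩
  · rintro ⟨h1, h2⟩
    refine ⟨fun b hb => ?_, h2⟩
    rw [h1] at hb
    exact Multiset.eq_of_mem_replicate hb

lemma PM.repl_mem_singleton_iff {g : G} {d : ℕ} (hd : addOrderOf g = d) (hodd : Odd d)
    (k : ℕ) : replicate k g ∈ PMZS ({g} : Set G) ↔ (Even k ∨ d ≤ k) := by
  rw [PM.mem_singleton_iff, ← PM.repl_pm_iff hd hodd k]
  refine ⟨fun h => h.2, fun h => ⟨?_, h⟩⟩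
  rw [Multiset.card_replicate]

/-- Generation: if `S` contains `g^2` and `g^d` then it contains all of `B±({g})`. -/
lemma PM.singleton_le {g : G} {d : ℕ} (hd : addOrderOf g = d) (hodd : Odd d)
    {S : AddSubmonoid (Multiset G)}
    (h2 : replicate 2 g ∈ S) (hdm : replicate d g ∈ S) : PMZS ({g} : Set G) ≤ S := by
  intro T hT
  rw [PM.mem_singleton_iff] at hT
  obtain ⟨h1, h2'⟩ := hT
  set k := Multiset.card T with hk
  rw [h1]
  rw [h1, PM.repl_pm_iff hd hodd] at h2'
  rcases Nat.even_or_odd k with ⟨m, hm⟩ | hko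
  · have : replicate k g = m • replicate 2 g := by rw [Multiset.nsmul_replicate]; congr 1; omega
    rw [this]; exact AddSubmonoid.nsmul_mem S h2 m
  · have hdk : d ≤ k := by
      rcases h2' with he | h
      · exact absurd he (Nat.not_even_iff_odd.mpr hko)
      · exact h
    have he : Even (k - d) := by
      rcases hodd with ⟨i, hi⟩; rcases hko with ⟨j, hj⟩; exact ⟨j - i, by omega⟩
    rcases he with ⟨m, hm⟩
    have : replicate k g = replicate d g + m • replicate 2 g := by
      rw [Multiset.nsmul_replicate, ← Multiset.replicate_add]; congr 1; omega
    rw [this]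
    exact AddSubmonoid.add_mem S hdm (AddSubmonoid.nsmul_mem S h2 m)

/-- Atoms of any `S` between `B±({g})` and `B±(G)` of replicate form are `g^2` and `g^d`. -/
lemma PM.atom_repl_iff {g : G} {d : ℕ} (hd : addOrderOf g = d) (hodd : Odd d) (h3 : 3 ≤ d)
    {S : AddSubmonoid (Multiset G)} (hle : PMZS ({g} : Set G) ≤ S)
    (hub : S ≤ PMZS (Set.univ : Set G)) (k : ℕ) :
    IsPMAtom S (replicate k g) ↔ (k = 2 ∨ k = d) := by
  have cond : ∀ i : ℕ, replicate i g ∈ S → (Even i ∨ d ≤ i) := fun i hi =>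
    (PM.repl_pm_iff hd hodd i).mp ((PM.mem_univ).mp (hub hi))
  have hmem2 : replicate 2 g ∈ S := hle ((PM.repl_mem_singleton_iff hd hodd 2).mpr
    (Or.inl ⟨1, rfl⟩))
  have hmemd : replicate d g ∈ S := hle ((PM.repl_mem_singleton_iff hd hodd d).mpr (Or.inr le_rfl))
  have hrepl : ∀ i : ℕ, (Even i ∨ d ≤ i) → replicate i g ∈ S := fun i hi =>
    hle ((PM.repl_mem_singleton_iff hd hodd i).mpr hi)
  constructor
  · rintro ⟨hmem, hne, hatom⟩
    have hk0 : k ≠ 0 := by rintro rfl; exact hne rfl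
    have hcond := cond k hmem
    by_contra hk
    push_neg at hk
    obtain ⟨hk2, hkd⟩ := hk
    -- split replicate k g into two nonzero pieces in S
    have hsplit : ∃ i j : ℕ, i ≠ 0 ∧ j ≠ 0 ∧ i + j = k ∧ (Even i ∨ d ≤ i) ∧ (Even j ∨ d ≤ j) := by
      rcases hcond with ⟨m, hm⟩ | hdk
      · have hm4 : 4 ≤ k := by omega
        exact ⟨2, k - 2, by omega, by omega, by omega, Or.inl ⟨1, rfl⟩,
          Or.inl ⟨m - 1, by omega⟩⟩
      · rcases Nat.even_or_odd k with he | ho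
        · rcases he with ⟨m, hm⟩
          exact ⟨2, k - 2, by omega, by omega, by omega, Or.inl ⟨1, rfl⟩,
            Or.inl ⟨m - 1, by omega⟩⟩
        · have : d < k := lt_of_le_of_ne hdk (fun h => hkd h.symm)
          have he : Even (k - d) := by
            rcases hodd with ⟨i, hi⟩; rcases ho with ⟨j, hj⟩; exact ⟨j - i, by omega⟩
          rcases he with ⟨m, hm⟩
          exact ⟨d, k - d, by omega, by omega, by omega, Or.inr le_rfl, Or.inl ⟨m, by omega⟩⟩
    obtain ⟨i, j, hi0, hj0, hij, hie, hje⟩ := hsplit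
    have := hatom (replicate i g) (replicate j g) (hrepl i hie) (hrepl j hje)
      (by rw [← Multiset.replicate_add, hij])
    rcases this with h | h
    · exact hi0 (by simpa using congrArg Multiset.card h)
    · exact hj0 (by simpa using congrArg Multiset.card h)
  · have key : ∀ k : ℕ, k ≠ 0 → (∀ i j : ℕ, i + j = k → i ≠ 0 → j ≠ 0 →
        ¬((Even i ∨ d ≤ i) ∧ (Even j ∨ d ≤ j))) → (Even k ∨ d ≤ k) →
        IsPMAtom S (replicate k g) := by
      intro k hk0 hnd hks
      refine ⟨hrepl k hks, fun h => hk0 (by simpa using congrArg Multiset.card h), ?_⟩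
      intro B C hB hC hBC
      have hBr : B = replicate (Multiset.card B) g :=
        PM.sub_replicate (hBC ▸ le_add_right B C)
      have hCr : C = replicate (Multiset.card C) g :=
        PM.sub_replicate (hBC ▸ le_add_left C B)
      set i := Multiset.card B
      set j := Multiset.card C
      have hij : i + j = k := by
        have := congrArg Multiset.card hBC; simpa using this.symm
      by_contra hcon
      push_neg at hcon
      obtain ⟨hB0, hC0⟩ := hcon
      have hi0 : i ≠ 0 := fun h => hB0 (by rw [hBr, h]; rfl)
      have hj0 : j ≠ 0 := fun h => hC0 (by rw [hCr, h]; rfl)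
      exact hnd i j hij hi0 hj0 ⟨cond i (hBr ▸ hB), cond j (hCr ▸ hC)⟩
    rintro (rfl | hkd)
    · refine key 2 (by omega) ?_ (Or.inl ⟨1, rfl⟩)
      rintro i j hij hi0 hj0 ⟨hie, hje⟩
      rcases hie with ⟨m, hm⟩ | h <;> rcases hje with ⟨m', hm'⟩ | h' <;> omega
    · rw [hkd]
      refine key d (by omega) ?_ (Or.inr le_rfl)
      rintro i j hij hi0 hj0 ⟨hie, hje⟩
      have hod : Odd d := hodd
      rcases hod with ⟨t, ht⟩
      rcases hie with ⟨m, hm⟩ | h <;> rcases hje with ⟨m', hm'⟩ | h' <;> omega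

/-- factorization bookkeeping -/
lemma PM.length_eq {g : G} {d : ℕ} (hd : addOrderOf g = d) (hodd : Odd d) (h3 : 3 ≤ d)
    {S : AddSubmonoid (Multiset G)} (hle : PMZS ({g} : Set G) ≤ S)
    (hub : S ≤ PMZS (Set.univ : Set G)) (l : List (Multiset G))
    (hl : ∀ A ∈ l, IsPMAtom S A) {N : ℕ} (hsum : l.sum = replicate N g) :
    ∃ a b : ℕ, l.length = a + b ∧ N = 2 * a + d * b := by
  induction l generalizing N with
  | nil =>
    refine ⟨0, 0, rfl, ?_⟩
    have := congrArg Multiset.card hsum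
    simp at this
    omega
  | cons A t ih =>
    rw [List.sum_cons] at hsum
    have hAle : A ≤ replicate N g := hsum ▸ le_add_right A t.sum
    have hArep : A = replicate (Multiset.card A) g := PM.sub_replicate hAle
    have htle : t.sum ≤ replicate N g := hsum ▸ le_add_left t.sum A
    have htrep : t.sum = replicate (Multiset.card t.sum) g := PM.sub_replicate htle
    have hcard : Multiset.card A + Multiset.card t.sum = N := by
      have := congrArg Multiset.card hsum
      simpa using this
    have hatom : IsPMAtom S A := hl A List.mem_cons_self
    have hAk : Multiset.card A = 2 ∨ Multiset.card A = d :=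
      (PM.atom_repl_iff hd hodd h3 hle hub _).mp (hArep ▸ hatom)
    obtain ⟨a, b, hab, hN⟩ := ih (fun B hB => hl B (List.mem_cons_of_mem A hB)) htrep
    rcases hAk with h2 | hdk
    · exact ⟨a + 1, b, by simp [hab]; ring, by rw [← hcard, h2, hN]; ring⟩
    · exact ⟨a, b + 1, by simp [hab]; ring, by rw [← hcard, hdk, hN]; ring⟩

lemma PM.lengthSet_2d {g : G} {d : ℕ} (hd : addOrderOf g = d) (hodd : Odd d) (h3 : 3 ≤ d)
    {S : AddSubmonoid (Multiset G)} (hle : PMZS ({g} : Set G) ≤ S)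
    (hub : S ≤ PMZS (Set.univ : Set G)) :
    LengthSet S (replicate (2 * d) g) = {2, d} := by
  have hmem2 : replicate 2 g ∈ S := hle ((PM.repl_mem_singleton_iff hd hodd 2).mpr
    (Or.inl ⟨1, rfl⟩))
  have hmemd : replicate d g ∈ S := hle ((PM.repl_mem_singleton_iff hd hodd d).mpr (Or.inr le_rfl))
  have hat2 : IsPMAtom S (replicate 2 g) :=
    (PM.atom_repl_iff hd hodd h3 hle hub 2).mpr (Or.inl rfl)
  have hatd : IsPMAtom S (replicate d g) :=
    (PM.atom_repl_iff hd hodd h3 hle hub d).mpr (Or.inr rfl)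
  ext k
  simp only [Set.mem_insert_iff, Set.mem_singleton_iff]
  constructor
  · rintro ⟨l, hl, hsum, rfl⟩
    obtain ⟨a, b, hab, hN⟩ := PM.length_eq hd hodd h3 hle hub l hl hsum
    rw [hab]
    have hble : d * b ≤ d * 2 := by omega
    have hb2 : b ≤ 2 := Nat.le_of_mul_le_mul_left hble (by omega)
    interval_cases b
    · simp at hN; right; omega
    · exfalso
      rcases hodd with ⟨i, hi⟩
      omega
    · left; omega
  · have hlist2 : (2:ℕ) ∈ LengthSet S (replicate (2 * d) g) := by
      refine ⟨[replicate d g, replicate d g], ?_, ?_, rfl⟩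
      · intro A hA
        rcases List.mem_pair.mp hA with rfl | rfl <;> exact hatd
      · show replicate d g + (replicate d g + 0) = _
        rw [add_zero, ← Multiset.replicate_add]
        congr 1; omega
    have hlistd : d ∈ LengthSet S (replicate (2 * d) g) := by
      refine ⟨List.replicate d (replicate 2 g), ?_, ?_, List.length_replicate⟩
      · intro A hA
        rw [List.eq_of_mem_replicate hA]
        exact hat2
      · rw [List.sum_replicate, Multiset.nsmul_replicate, Nat.mul_comm]
    rintro (rfl | hk2)
    · exact hlist2
    · rw [hk2]; exact hlistd

lemma PM.dm_mem {g : G} {d : ℕ} (hd : addOrderOf g = d) (hodd : Odd d) (h3 : 3 ≤ d)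
    {S : AddSubmonoid (Multiset G)} (hle : PMZS ({g} : Set G) ≤ S)
    (hub : S ≤ PMZS (Set.univ : Set G)) : d - 2 ∈ DeltaM S := by
  refine ⟨replicate (2 * d) g, hle ((PM.repl_mem_singleton_iff hd hodd _).mpr (Or.inl ⟨d, by ring⟩)),
    ?_⟩
  rw [PM.lengthSet_2d hd hodd h3 hle hub]
  refine ⟨by omega, 2, by simp, ?_, ?_⟩
  · right; show 2 + (d - 2) ∈ _; have : 2 + (d - 2) = d := by omega
    rw [this]; rfl
  · rintro b (rfl | rfl) hb <;> omega

lemma PM.singleton_le_univ {g : G} : PMZS ({g} : Set G) ≤ PMZS (Set.univ : Set G) :=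
  fun _ hT => ⟨fun _ _ => Set.mem_univ _, hT.2⟩

lemma PM.len_add {S : AddSubmonoid (Multiset G)} {a b : Multiset G} {x y : ℕ}
    (hx : x ∈ LengthSet S a) (hy : y ∈ LengthSet S b) : x + y ∈ LengthSet S (a + b) := by
  obtain ⟨l₁, h1, h2, h3⟩ := hx
  obtain ⟨l₂, h4, h5, h6⟩ := hy
  exact ⟨l₁ ++ l₂, fun A hA => (List.mem_append.mp hA).elim (h1 A) (h4 A),
    by rw [List.sum_append, h2, h5], by rw [List.length_append, h3, h6]⟩

lemma PM.len_nsmul {S : AddSubmonoid (Multiset G)} {a : Multiset G} {x : ℕ}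
    (hx : x ∈ LengthSet S a) (n : ℕ) : n * x ∈ LengthSet S (n • a) := by
  induction n with
  | zero => exact ⟨[], by simp, rfl, by simp⟩
  | succ n ih =>
    have := PM.len_add ih hx
    rw [succ_nsmul]
    convert this using 1
    ring

/-- every distance in `B±({g})` is divisible by `d - 2`. -/
lemma PM.dvd_of_mem_deltaM_singleton {g : G} {d : ℕ} (hd : addOrderOf g = d) (hodd : Odd d)
    (h3 : 3 ≤ d) {e : ℕ} (he : e ∈ DeltaM (PMZS ({g} : Set G))) : (d - 2) ∣ e := by
  obtain ⟨T, hT, hpos, y, hy, hye, -⟩ := he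
  have hTr : T = replicate (Multiset.card T) g := (PM.mem_singleton_iff.mp hT).1
  set N := Multiset.card T with hN
  have key2 : ∀ z ∈ LengthSet (PMZS ({g} : Set G)) T, ∃ b : ℕ, 2 * z + (d - 2) * b = N := by
    intro z hz
    obtain ⟨l, hl, hsum, rfl⟩ := hz
    obtain ⟨a, b, hab, hNd⟩ := PM.length_eq hd hodd h3 le_rfl PM.singleton_le_univ l hl
      (by rw [hsum, hTr])
    refine ⟨b, ?_⟩
    have hsub : (d - 2) * b = d * b - 2 * b := Nat.sub_mul d 2 b
    have hle2 : 2 * b ≤ d * b := Nat.mul_le_mul_right b (by omega)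
    omega
  obtain ⟨b₁, hb₁⟩ := key2 y hy
  obtain ⟨b₂, hb₂⟩ := key2 (y + e) hye
  have h2e : 2 * e = (d - 2) * b₁ - (d - 2) * b₂ := by omega
  have hdvd : (d - 2) ∣ 2 * e := by
    rw [h2e]
    exact Nat.dvd_sub (dvd_mul_right _ _) (dvd_mul_right _ _)
  have hcop : Nat.Coprime (d - 2) 2 := by
    refine Nat.coprime_two_right.mpr ?_
    rcases hodd with ⟨i, hi⟩
    exact ⟨i - 1, by omega⟩
  exact hcop.dvd_of_dvd_mul_right (mul_comm 2 e ▸ hdvd)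

/-- in any submonoid, the min of the distance set divides every distance. -/
lemma PM.sInf_dvd {S : AddSubmonoid (Multiset G)} (hS : S ≤ PMZS (Set.univ : Set G))
    (hne : (DeltaM S).Nonempty) {e : ℕ} (he : e ∈ DeltaM S) : sInf (DeltaM S) ∣ e := by
  set m := sInf (DeltaM S) with hm
  obtain ⟨a, haS, hmpos, x, hx, hxm, -⟩ := Nat.sInf_mem hne
  obtain ⟨b, hbS, hepos, y, hy, hye, -⟩ := he
  by_contra hnd
  have hr0 : e % m ≠ 0 := fun h => hnd (Nat.dvd_of_mod_eq_zero h)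
  have hrm : e % m < m := Nat.mod_lt e hmpos
  set c : Multiset G := b + e • a with hc
  have hcS : c ∈ S := S.add_mem hbS (S.nsmul_mem haS e)
  have hjle : ∀ j ≤ e, y + e * x + j * m ∈ LengthSet S c := by
    intro j hj
    have h1 : (e - j) * x ∈ LengthSet S ((e - j) • a) := PM.len_nsmul hx (e - j)
    have h2 : j * (x + m) ∈ LengthSet S (j • a) := PM.len_nsmul hxm j
    have h12 := PM.len_add hy (PM.len_add h1 h2)
    rw [← add_nsmul, Nat.sub_add_cancel hj] at h12
    have hjx : j * x ≤ e * x := Nat.mul_le_mul_right x hj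
    have harith : y + ((e - j) * x + j * (x + m)) = y + e * x + j * m := by
      rw [Nat.sub_mul, Nat.mul_add]
      omega
    rwa [harith] at h12
  set j0 := e / m with hj0
  have hu : y + e * x + j0 * m ∈ LengthSet S c := hjle j0 (le_trans (Nat.div_le_self e m)
    le_rfl)
  have hv : y + e * x + e ∈ LengthSet S c := by
    have := PM.len_add hye (PM.len_nsmul hx e)
    have harith : y + e + e * x = y + e * x + e := by ring
    rwa [harith] at this
  set u := y + e * x + j0 * m with hud
  set v := y + e * x + e with hvd
  have hdm : m * j0 + e % m = e := Nat.div_add_mod e m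
  have hcm : j0 * m = m * j0 := mul_comm _ _
  have huv : u < v := by omega
  have hvu : v - u = e % m := by omega
  set A := {l | l ∈ LengthSet S c ∧ u ≤ l ∧ l < v} with hA
  have hAne : A.Nonempty := ⟨u, hu, le_rfl, huv⟩
  have hAbdd : BddAbove A := ⟨v, fun l hl => le_of_lt hl.2.2⟩
  set u' := sSup A with hu'
  have hu'A : u' ∈ A := Nat.sSup_mem hAne hAbdd
  set B := {l | l ∈ LengthSet S c ∧ u' < l} with hB
  have hvB : v ∈ B := ⟨hv, hu'A.2.2⟩
  set w := sInf B with hw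
  have hwB : w ∈ B := Nat.sInf_mem ⟨v, hvB⟩
  have hwv : w ≤ v := Nat.sInf_le hvB
  have hweq : w = v := by
    rcases lt_or_eq_of_le hwv with hlt | heq
    · exfalso
      have hwA : w ∈ A := ⟨hwB.1, le_trans hu'A.2.1 (le_of_lt hwB.2), hlt⟩
      have : w ≤ u' := le_csSup hAbdd hwA
      exact absurd hwB.2 (not_lt.mpr this)
    · exact heq
  have hu'1 : u ≤ u' := hu'A.2.1
  have hu'2 : u' < v := hu'A.2.2
  have hgap : v - u' ∈ DeltaM S := by
    refine ⟨c, hcS, ?_⟩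
    refine ⟨by omega, u', hu'A.1, ?_, ?_⟩
    · have : u' + (v - u') = v := by omega
      rw [this]
      exact hv
    · intro b' hb' hub'
      have : w ≤ b' := Nat.sInf_le ⟨hb', hub'⟩
      omega
  have hmle : m ≤ v - u' := Nat.sInf_le hgap
  have : v - u' ≤ e % m := by omega
  omega

/-- divisor-closedness of `B±(G₀)` for any `G₀`. -/
lemma PM.divClosed (G₀ : Set G) : IsDivClosed (PMZS (Set.univ : Set G)) (PMZS G₀) := by
  refine ⟨fun T hT => ⟨fun _ _ => Set.mem_univ _, hT.2⟩, ?_⟩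
  rintro s hs a ha ⟨c, hc, rfl⟩
  exact ⟨fun x hx => hs.1 x (Multiset.mem_add.mpr (Or.inl hx)), ha.2⟩

lemma PM.repl_zero_mem_univ (k : ℕ) : replicate k (0 : G) ∈ PMZS (Set.univ : Set G) :=
  ⟨fun _ _ => Set.mem_univ _, replicate k 0, 0, (add_zero _).symm, by simp⟩

/-- main step for the upper inclusion. -/
lemma PM.part2 {S : AddSubmonoid (Multiset G)}
    (hodd : Odd (AddMonoid.exponent G)) (hexp : AddMonoid.exponent G ≠ 0)
    (hdc : IsDivClosed (PMZS (Set.univ : Set G)) S) (hne : (DeltaM S).Nonempty) :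
    ∃ d : ℕ, d ∣ AddMonoid.exponent G ∧ 3 ≤ d ∧ sInf (DeltaM S) ∣ d - 2 := by
  have hSH := hdc.1
  -- Step 1: find a nonzero element appearing in S
  have hg : ∃ T ∈ S, ∃ g ∈ T, g ≠ (0 : G) := by
    by_contra hcon
    push_neg at hcon
    obtain ⟨e, T, hT, hpos, y, hy, hye, -⟩ := hne
    have hlen : ∀ l : List (Multiset G), (∀ A ∈ l, IsPMAtom S A) →
        l.length = Multiset.card l.sum := by
      intro l hl
      induction l with
      | nil => simp
      | cons A t ih =>
        have hatom := hl A List.mem_cons_self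
        obtain ⟨hAS, hA0, hmin⟩ := hatom
        have hAzero : ∀ x ∈ A, x = (0 : G) := fun x hx => hcon A hAS x hx
        have hArep : A = replicate (Multiset.card A) 0 := Multiset.eq_replicate_card.mpr hAzero
        have hcard : Multiset.card A = 1 := by
          by_contra hc1
          have hc0 : Multiset.card A ≠ 0 := fun h => hA0 (Multiset.card_eq_zero.mp h)
          have h2 : 2 ≤ Multiset.card A := by omega
          have h1S : replicate 1 (0 : G) ∈ S := by
            refine hdc.2 A hAS _ (PM.repl_zero_mem_univ 1) ⟨replicate (Multiset.card A - 1) 0,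
              PM.repl_zero_mem_univ _, ?_⟩
            nth_rewrite 1 [hArep]
            rw [← Multiset.replicate_add]
            congr 1; omega
          have h2S : replicate (Multiset.card A - 1) (0 : G) ∈ S := by
            refine hdc.2 A hAS _ (PM.repl_zero_mem_univ _) ⟨replicate 1 0,
              PM.repl_zero_mem_univ _, ?_⟩
            nth_rewrite 1 [hArep]
            rw [← Multiset.replicate_add]
            congr 1; omega
          rcases hmin _ _ h1S h2S (by nth_rewrite 1 [hArep]; rw [← Multiset.replicate_add]; congr 1; omega)
            with h | h
          · exact absurd (congrArg Multiset.card h) (by simp)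
          · have := congrArg Multiset.card h
            simp at this
            omega
        rw [List.length_cons, List.sum_cons, Multiset.card_add,
          ih (fun B hB => hl B (List.mem_cons_of_mem A hB)), hcard]
        omega
    obtain ⟨l₁, hl₁, hs₁, hk₁⟩ := hy
    obtain ⟨l₂, hl₂, hs₂, hk₂⟩ := hye
    have e1 := hlen l₁ hl₁
    have e2 := hlen l₂ hl₂
    rw [hs₁] at e1
    rw [hs₂] at e2
    omega
  obtain ⟨T, hTS, g, hgT, hg0⟩ := hg
  set d := addOrderOf g with hd
  have hdn : d ∣ AddMonoid.exponent G := AddMonoid.addOrder_dvd_exponent g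
  have hdodd : Odd d := by
    obtain ⟨c, hc⟩ := hdn
    rw [hc] at hodd
    exact (Nat.odd_mul.mp hodd).1
  have hd0 : d ≠ 0 := by
    intro h
    rw [h] at hdn
    exact hexp (Nat.eq_zero_of_zero_dvd hdn)
  have hd1 : d ≠ 1 := fun h => hg0 (AddMonoid.addOrderOf_eq_one_iff.mp h)
  have h3d : 3 ≤ d := by
    rcases hdodd with ⟨t, ht⟩
    omega
  have hdg : addOrderOf g = d := hd.symm
  have hpm2 : replicate 2 g ∈ PMZS (Set.univ : Set G) :=
    ⟨fun _ _ => Set.mem_univ _, (PM.repl_pm_iff hdg hdodd 2).mpr (Or.inl ⟨1, rfl⟩)⟩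
  have hpmd : replicate d g ∈ PMZS (Set.univ : Set G) :=
    ⟨fun _ _ => Set.mem_univ _, (PM.repl_pm_iff hdg hdodd d).mpr (Or.inr le_rfl)⟩
  obtain ⟨R, hTR⟩ := Multiset.exists_cons_of_mem hgT
  have h2S : replicate 2 g ∈ S := by
    have hrepl2 : ({g} : Multiset G) + {g} = replicate 2 g := by
      rw [Multiset.singleton_add]
      rfl
    have hTT : T + T = replicate 2 g + (R + R) := by
      rw [hTR, ← Multiset.singleton_add, ← hrepl2]
      exact add_add_add_comm _ _ _ _
    exact hdc.2 (T + T) (S.add_mem hTS hTS) _ hpm2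
      ⟨R + R, ⟨fun _ _ => Set.mem_univ _, PM.doubling R⟩, hTT⟩
  have hdS : replicate d g ∈ S := by
    have h2d : replicate (d * 2) g ∈ S := by
      rw [← Multiset.nsmul_replicate]
      exact S.nsmul_mem h2S d
    exact hdc.2 _ h2d _ hpmd ⟨replicate d g, hpmd,
      by rw [← Multiset.replicate_add]; congr 1; omega⟩
  have hle := PM.singleton_le hdg hdodd h2S hdS
  exact ⟨d, hdn, h3d, PM.sInf_dvd hSH hne (PM.dm_mem hdg hdodd h3d hle hSH)⟩

/-- For `G` finite abelian with odd exponent `n ≥ 3` and `H = B±(G)`: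
with `D₁ = {d - 2 : d ∣ n, d ≥ 3}` and `D₂ = {d' : d' ∣ d for some d ∈ D₁}`, one has
`D₁ ⊆ Δ*(H) ⊆ D₂`; in particular `max Δ*(H) = n - 2`. -/
theorem stmt_7 (G : Type*) [AddCommGroup G] [Finite G]
    (hodd : Odd (AddMonoid.exponent G)) (h3 : 3 ≤ AddMonoid.exponent G) :
    {m : ℕ | ∃ d : ℕ, d ∣ AddMonoid.exponent G ∧ 3 ≤ d ∧ m = d - 2} ⊆
        DeltaStar (PMZS (Set.univ : Set G)) ∧
    DeltaStar (PMZS (Set.univ : Set G)) ⊆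
        {d' : ℕ | ∃ d : ℕ, d ∣ AddMonoid.exponent G ∧ 3 ≤ d ∧ d' ∣ d - 2} ∧
    IsGreatest (DeltaStar (PMZS (Set.univ : Set G))) (AddMonoid.exponent G - 2) := by
  have hexp : AddMonoid.exponent G ≠ 0 := AddMonoid.exponent_ne_zero_of_finite
  have hpart1 : {m : ℕ | ∃ d : ℕ, d ∣ AddMonoid.exponent G ∧ 3 ≤ d ∧ m = d - 2} ⊆
      DeltaStar (PMZS (Set.univ : Set G)) := by
    rintro m ⟨d, hdn, h3d, rfl⟩
    obtain ⟨g0, hg0⟩ := AddMonoid.exists_addOrderOf_eq_exponent (AddMonoid.ExponentExists.of_finite (G := G))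
    have hg0ne : addOrderOf g0 ≠ 0 := by rw [hg0]; exact hexp
    have hdvd' : d ∣ addOrderOf g0 := by rw [hg0]; exact hdn
    set g := (addOrderOf g0 / d) • g0 with hgdef
    have hdg : addOrderOf g = d := by
      have h1 : addOrderOf g0 / d ≠ 0 := by
        have h2 := Nat.le_of_dvd (Nat.pos_of_ne_zero hg0ne) hdvd'
        have := Nat.div_pos h2 (by omega)
        omega
      rw [hgdef, addOrderOf_nsmul_of_dvd h1 (Nat.div_dvd_of_dvd hdvd'),
        Nat.div_div_self hdvd' hg0ne]
    have hdodd : Odd d := by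
      obtain ⟨c, hc⟩ := hdn
      rw [hc] at hodd
      exact (Nat.odd_mul.mp hodd).1
    have hdm := PM.dm_mem hdg hdodd h3d le_rfl PM.singleton_le_univ
    refine ⟨PMZS ({g} : Set G), PM.divClosed _, ⟨d - 2, hdm⟩, ?_⟩
    refine le_antisymm (le_csInf ⟨_, hdm⟩ ?_) (Nat.sInf_le hdm)
    intro e he
    have hdvd2 := PM.dvd_of_mem_deltaM_singleton hdg hdodd h3d he
    obtain ⟨a, ha, hpos, -⟩ := he
    exact Nat.le_of_dvd hpos hdvd2
  have hpart2 : DeltaStar (PMZS (Set.univ : Set G)) ⊆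
      {d' : ℕ | ∃ d : ℕ, d ∣ AddMonoid.exponent G ∧ 3 ≤ d ∧ d' ∣ d - 2} := by
    rintro m ⟨S, hdc, hne, rfl⟩
    exact PM.part2 hodd hexp hdc hne
  refine ⟨hpart1, hpart2, hpart1 ⟨AddMonoid.exponent G, dvd_rfl, h3, rfl⟩, fun m hm => ?_⟩
  obtain ⟨d, hdn, h3d, hdvd⟩ := hpart2 hm
  have hdle : d ≤ AddMonoid.exponent G := Nat.le_of_dvd (by omega) hdn
  have := Nat.le_of_dvd (by omega) hdvd
  omega
end
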